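/- arXiv:1712.08892 — 2 statements merged into one kernel-verified Lean document; each statement's English description precedes it below -/
import Mathlib

section
/- Assume hypothesis (H). Let (k_n) be a sequence with k_n → ∞ and k_n = o(n) as n → ∞. Then there exist a constant C₃ > 0 and N such that for all n ≥ N, P(Z_n ≤ k_n) ≤ C₃·(1 + γ·n/k_n)^(−σ). -/
open MeasureTheory ProbabilityTheory Filter Real Set
open scoped ENNReal Topology

/-- Probability generating function of a distribution `c` on `ℕ`. -/
noncomputable def pgf (c : ℕ → ℝ) (x : ℝ) : ℝ := ∑' j : ℕ, c j * x ^ j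

/-- Generating function `H_n` of the critical GWI process:
`H_n(x) = ∏_{m=0}^{n-1} B(A_m(x))`. -/
noncomputable def Hgen (a b : ℕ → ℝ) (n : ℕ) (x : ℝ) : ℝ :=
  ∏ m ∈ Finset.range n, pgf b ((pgf a)^[m] x)

/-! ### Elementary inequalities -/

lemma one_sub_pow_le (j : ℕ) {t : ℝ} (ht0 : 0 ≤ t) (ht1 : t ≤ 1) :
    1 - t ^ j ≤ j * (1 - t) := by
  induction j with
  | zero => simp
  | succ j ih =>
    have hp : t ^ j ≤ 1 := pow_le_one₀ ht0 ht1
    have : 1 - t ^ (j+1) = (1 - t ^ j) + t ^ j * (1 - t) := by ring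
    rw [this]
    push_cast
    nlinarith [mul_nonneg (pow_nonneg ht0 j) (sub_nonneg.2 ht1)]

lemma one_sub_pow_ge (j : ℕ) {t : ℝ} (ht0 : 0 ≤ t) (ht1 : t ≤ 1) :
    (j : ℝ) * (1 - t) - ((j : ℝ) * ((j : ℝ) - 1) / 2) * (1 - t) ^ 2 ≤ 1 - t ^ j := by
  induction j with
  | zero => simp
  | succ j ih =>
    have hbern : 1 - (j : ℝ) * (1 - t) ≤ t ^ j := by
      have := one_add_mul_le_pow (a := t - 1) (by linarith) j
      calc 1 - (j:ℝ) * (1-t) = 1 + (j:ℝ) * (t-1) := by ring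
        _ ≤ (1 + (t-1)) ^ j := this
        _ = t ^ j := by ring_nf
    have : 1 - t ^ (j+1) = (1 - t ^ j) + t ^ j * (1 - t) := by ring
    rw [this]
    push_cast
    nlinarith [sub_nonneg.2 ht1, mul_nonneg (sub_nonneg.2 ht1) (sub_nonneg.2 ht1)]

lemma pow_sub_pow_le (j : ℕ) {t₁ t₂ : ℝ} (h0 : 0 ≤ t₁) (h12 : t₁ ≤ t₂) (h2 : t₂ ≤ 1) :
    t₂ ^ j - t₁ ^ j ≤ j * (t₂ - t₁) := by
  induction j with
  | zero => simp
  | succ j ih =>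
    have h1 : t₁ ≤ 1 := le_trans h12 h2
    have hp1 : t₁ ^ j ≤ 1 := pow_le_one₀ h0 h1
    have hp1' : 0 ≤ t₁ ^ j := pow_nonneg h0 j
    have h2' : 0 ≤ t₂ := le_trans h0 h12
    have : t₂ ^ (j+1) - t₁ ^ (j+1) = t₂ * (t₂ ^ j - t₁ ^ j) + (t₂ - t₁) * t₁ ^ j := by ring
    rw [this]
    push_cast
    nlinarith [mul_le_mul_of_nonneg_left ih h2', sub_nonneg.2 h12,
      mul_nonneg (sub_nonneg.2 h12) hp1',
      mul_le_mul_of_nonneg_right (sub_nonneg.2 h2)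
        (mul_nonneg (Nat.cast_nonneg j : (0:ℝ) ≤ j) (sub_nonneg.2 h12))]

/-- Key lower gap: for `J ≥ 2`, `(1-s)^J - 1 + J s ≥ s^2` on `[0,1]`. -/
lemma gap_lower {J : ℕ} (hJ : 2 ≤ J) {s : ℝ} (hs0 : 0 ≤ s) (hs1 : s ≤ 1) :
    s ^ 2 ≤ (1 - s) ^ J - 1 + J * s := by
  obtain ⟨d, rfl⟩ : ∃ d, J = d + 2 := ⟨J - 2, by omega⟩
  have hbern : 1 - (d : ℝ) * s ≤ (1 - s) ^ d := by
    have := one_add_mul_le_pow (a := -s) (by linarith) d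
    calc 1 - (d:ℝ) * s = 1 + (d:ℝ) * (-s) := by ring
      _ ≤ (1 + (-s)) ^ d := this
      _ = (1 - s) ^ d := by ring_nf
  have hpow : (1 - s) ^ (d + 2) = (1 - s) ^ 2 * (1 - s) ^ d := by ring
  have hnn : (0:ℝ) ≤ (1 - s) ^ 2 := sq_nonneg _
  have h1 : (1 - s) ^ 2 * (1 - (d:ℝ) * s) ≤ (1 - s) ^ (d + 2) := by
    rw [hpow]; exact mul_le_mul_of_nonneg_left hbern hnn
  push_cast
  nlinarith [mul_nonneg (mul_nonneg (Nat.cast_nonneg d : (0:ℝ) ≤ d) (mul_nonneg hs0 hs0)) (sub_nonneg.2 hs1)]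
/-! ### PGF basics -/

lemma summable_pgf {c : ℕ → ℝ} (hc : ∀ j, 0 ≤ c j) (hsum : Summable c) {x : ℝ}
    (hx0 : 0 ≤ x) (hx1 : x ≤ 1) : Summable (fun j : ℕ => c j * x ^ j) :=
  hsum.of_nonneg_of_le (fun j => mul_nonneg (hc j) (pow_nonneg hx0 j))
    (fun j => mul_le_of_le_one_right (hc j) (pow_le_one₀ hx0 hx1))

lemma pgf_nonneg {c : ℕ → ℝ} (hc : ∀ j, 0 ≤ c j) {x : ℝ} (hx0 : 0 ≤ x) :
    0 ≤ pgf c x :=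
  tsum_nonneg fun j => mul_nonneg (hc j) (pow_nonneg hx0 j)

lemma pgf_le_one {c : ℕ → ℝ} (hc : ∀ j, 0 ≤ c j) (hsum : Summable c) (h1 : ∑' j, c j = 1)
    {x : ℝ} (hx0 : 0 ≤ x) (hx1 : x ≤ 1) : pgf c x ≤ 1 := by
  rw [pgf, ← h1]
  exact Summable.tsum_le_tsum (fun j => mul_le_of_le_one_right (hc j) (pow_le_one₀ hx0 hx1))
    (summable_pgf hc hsum hx0 hx1) hsum

lemma pgf_pos {c : ℕ → ℝ} (hc : ∀ j, 0 ≤ c j) (hsum : Summable c) (hc0 : 0 < c 0)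
    {x : ℝ} (hx0 : 0 ≤ x) (hx1 : x ≤ 1) : 0 < pgf c x := by
  have h := Summable.le_tsum (summable_pgf hc hsum hx0 hx1) 0
    (fun j _ => mul_nonneg (hc j) (pow_nonneg hx0 j))
  simpa [pgf] using lt_of_lt_of_le (by simpa using hc0) h

lemma one_sub_pgf_eq {c : ℕ → ℝ} (hc : ∀ j, 0 ≤ c j) (hsum : Summable c) (h1 : ∑' j, c j = 1)
    {s : ℝ} (hs0 : 0 ≤ s) (hs1 : s ≤ 1) :
    1 - pgf c (1 - s) = ∑' j : ℕ, c j * (1 - (1 - s) ^ j) := by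
  have ht0 : (0:ℝ) ≤ 1 - s := by linarith
  have ht1 : (1:ℝ) - s ≤ 1 := by linarith
  calc 1 - pgf c (1 - s) = (∑' j : ℕ, c j) - ∑' j : ℕ, c j * (1-s)^j := by rw [pgf, h1]
    _ = ∑' j : ℕ, (c j - c j * (1-s)^j) := (Summable.tsum_sub hsum (summable_pgf hc hsum ht0 ht1)).symm
    _ = ∑' j : ℕ, c j * (1 - (1-s)^j) := tsum_congr fun j => by ring

lemma summable_one_sub_pow {c : ℕ → ℝ} (hc : ∀ j, 0 ≤ c j) (hsum : Summable c)
    {s : ℝ} (hs0 : 0 ≤ s) (hs1 : s ≤ 1) :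
    Summable (fun j : ℕ => c j * (1 - (1 - s) ^ j)) := by
  have ht0 : (0:ℝ) ≤ 1 - s := by linarith
  have ht1 : (1:ℝ) - s ≤ 1 := by linarith
  refine hsum.of_nonneg_of_le (fun j => mul_nonneg (hc j) ?_) (fun j => ?_)
  · have := pow_le_one₀ ht0 ht1 (n := j); linarith
  · have := pow_nonneg ht0 j
    exact mul_le_of_le_one_right (hc j) (by linarith)

lemma one_sub_pgf_le {c : ℕ → ℝ} (hc : ∀ j, 0 ≤ c j) (hsum : Summable c) (h1 : ∑' j, c j = 1)
    (hm : Summable (fun j : ℕ => c j * j))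
    {s : ℝ} (hs0 : 0 ≤ s) (hs1 : s ≤ 1) :
    1 - pgf c (1 - s) ≤ (∑' j : ℕ, c j * j) * s := by
  have ht0 : (0:ℝ) ≤ 1 - s := by linarith
  have ht1 : (1:ℝ) - s ≤ 1 := by linarith
  rw [one_sub_pgf_eq hc hsum h1 hs0 hs1, ← tsum_mul_right]
  refine Summable.tsum_le_tsum (fun j => ?_) (summable_one_sub_pow hc hsum hs0 hs1) (hm.mul_right s)
  have hp := one_sub_pow_le j ht0 ht1
  have : (j:ℝ) * (1 - (1-s)) = (j:ℝ) * s := by ring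
  calc c j * (1 - (1-s)^j) ≤ c j * ((j:ℝ) * (1 - (1-s))) :=
        mul_le_mul_of_nonneg_left hp (hc j)
    _ = c j * (j:ℝ) * s := by ring

lemma one_sub_pgf_ge {c : ℕ → ℝ} (hc : ∀ j, 0 ≤ c j) (hsum : Summable c) (h1 : ∑' j, c j = 1)
    (hm : Summable (fun j : ℕ => c j * j))
    (hq : Summable (fun j : ℕ => c j * ((j:ℝ) * ((j:ℝ) - 1))))
    {s : ℝ} (hs0 : 0 ≤ s) (hs1 : s ≤ 1) :
    (∑' j : ℕ, c j * j) * s - ((∑' j : ℕ, c j * ((j:ℝ) * ((j:ℝ) - 1))) / 2) * s ^ 2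
      ≤ 1 - pgf c (1 - s) := by
  have ht0 : (0:ℝ) ≤ 1 - s := by linarith
  have ht1 : (1:ℝ) - s ≤ 1 := by linarith
  rw [one_sub_pgf_eq hc hsum h1 hs0 hs1]
  have hsum2 : Summable (fun j : ℕ => c j * (j:ℝ) * s - c j * ((j:ℝ) * ((j:ℝ)-1)) * (s^2/2)) :=
    ((hm.mul_right s).sub (hq.mul_right (s^2/2))).congr (fun j => by ring)
  have hle : ∀ j : ℕ, c j * (j:ℝ) * s - c j * ((j:ℝ) * ((j:ℝ)-1)) * (s^2/2)
      ≤ c j * (1 - (1-s)^j) := by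
    intro j
    have hp := one_sub_pow_ge j ht0 ht1
    have h' : (j:ℝ) * s - ((j:ℝ) * ((j:ℝ)-1) / 2) * s^2 ≤ 1 - (1-s)^j := by
      have e1 : (1:ℝ) - (1-s) = s := by ring
      have e2 : ((1:ℝ) - (1-s))^2 = s^2 := by rw [e1]
      rw [e1] at hp; linarith
    calc c j * (j:ℝ) * s - c j * ((j:ℝ) * ((j:ℝ)-1)) * (s^2/2)
        = c j * ((j:ℝ) * s - ((j:ℝ) * ((j:ℝ)-1) / 2) * s^2) := by ring
      _ ≤ c j * (1 - (1-s)^j) := mul_le_mul_of_nonneg_left h' (hc j)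
  have := Summable.tsum_le_tsum hle hsum2 (summable_one_sub_pow hc hsum hs0 hs1)
  rw [Summable.tsum_sub (hm.mul_right s) (hq.mul_right (s^2/2))] at this
  rw [tsum_mul_right, tsum_mul_right] at this
  linarith

lemma pgf_gap {c : ℕ → ℝ} (hc : ∀ j, 0 ≤ c j) (hsum : Summable c) (h1 : ∑' j, c j = 1)
    (hm : Summable (fun j : ℕ => c j * j)) (hmean : ∑' j : ℕ, c j * j = 1)
    {J : ℕ} (hJ : 2 ≤ J) (hcJ : 0 < c J)
    {s : ℝ} (hs0 : 0 ≤ s) (hs1 : s ≤ 1) :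
    c J * s ^ 2 ≤ s - (1 - pgf c (1 - s)) := by
  have ht0 : (0:ℝ) ≤ 1 - s := by linarith
  have ht1 : (1:ℝ) - s ≤ 1 := by linarith
  -- pgf c (1-s) ≥ ∑' (c j - c j * j * s + ite (j = J) (c J * s^2) 0)
  have hsum3 : Summable (fun j : ℕ =>
      c j - c j * (j:ℝ) * s + if j = J then c J * s^2 else 0) := by
    refine ((hsum.sub ((hm.mul_right s).congr (fun j => by ring))).add ?_)
    exact summable_of_ne_finset_zero (s := {J}) (fun j hj => by
      simp [Finset.mem_singleton] at hj; simp [hj])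
  have hle : ∀ j : ℕ,
      c j - c j * (j:ℝ) * s + (if j = J then c J * s^2 else 0) ≤ c j * (1-s)^j := by
    intro j
    by_cases hj : j = J
    · subst hj
      have hg := gap_lower hJ hs0 hs1
      have : 1 - (j:ℝ) * s + s^2 ≤ (1-s)^j := by linarith
      calc c j - c j * (j:ℝ) * s + (if j = j then c j * s^2 else 0)
          = c j * (1 - (j:ℝ) * s + s^2) := by simp; ring
        _ ≤ c j * (1-s)^j := mul_le_mul_of_nonneg_left this (hc j)
    · have hbern : 1 - (j:ℝ) * s ≤ (1-s)^j := by
        have := one_add_mul_le_pow (a := -s) (by linarith) j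
        calc 1 - (j:ℝ)*s = 1 + (j:ℝ)*(-s) := by ring
          _ ≤ (1 + (-s))^j := this
          _ = (1-s)^j := by ring_nf
      simp only [hj, if_false, add_zero]
      calc c j - c j * (j:ℝ) * s = c j * (1 - (j:ℝ)*s) := by ring
        _ ≤ c j * (1-s)^j := mul_le_mul_of_nonneg_left hbern (hc j)
  have hts := Summable.tsum_le_tsum hle hsum3 (summable_pgf hc hsum ht0 ht1)
  have e1 : ∑' j : ℕ, (c j - c j * (j:ℝ) * s + if j = J then c J * s^2 else 0)
      = 1 - s + c J * s^2 := by
    rw [Summable.tsum_add (hsum.sub ((hm.mul_right s).congr (fun j => by ring)))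
      (summable_of_ne_finset_zero (s := {J}) (fun j hj => by
        simp [Finset.mem_singleton] at hj; simp [hj]))]
    rw [Summable.tsum_sub hsum ((hm.mul_right s).congr (fun j : ℕ => by ring : ∀ j : ℕ, (c j * ↑j) * s = c j * ↑j * s))]
    rw [h1, show (∑' b : ℕ, if b = J then c J * s^2 else 0) = c J * s^2 from tsum_ite_eq J (fun _ => c J * s^2)]
    have : ∑' (j : ℕ), c j * (j:ℝ) * s = 1 * s := by
      rw [← hmean, ← tsum_mul_right]
    rw [this]; ring
  rw [e1] at hts
  have : pgf c (1 - s) = ∑' j : ℕ, c j * (1-s)^j := rfl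
  linarith [hts, this ▸ hts]
/-! ### One-step recursion bounds -/

lemma recip_step_low {u s cJ : ℝ} (hcJ : 0 ≤ cJ) (hs : 0 < s) (hu : 0 < u) (hus : u ≤ s)
    (hgap : cJ * s^2 ≤ s - u) : 1/s + cJ ≤ 1/u := by
  have key : cJ * (s*u) ≤ s - u := by nlinarith
  have h1 : 1/u - 1/s = (s-u)/(s*u) := by
    rw [div_sub_div _ _ hu.ne' hs.ne', one_mul, mul_one, mul_comm u s]
  have h2 : cJ ≤ (s-u)/(s*u) := (le_div_iff₀ (by positivity)).mpr key
  linarith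

lemma recip_step_high {u s γ : ℝ} (hγ : 0 < γ) (hs : 0 < s) (hγs : γ * s ≤ 1/2)
    (hlow : s - γ * s^2 ≤ u) : 1/u ≤ 1/s + γ + 2*γ^2*s := by
  have hu : 0 < u := by nlinarith
  rw [div_le_iff₀ hu]
  have hRpos : (0:ℝ) < 1/s + γ + 2*γ^2*s := by positivity
  have h2 : (1/s + γ + 2*γ^2*s) * (s - γ*s^2) ≤ (1/s + γ + 2*γ^2*s) * u :=
    mul_le_mul_of_nonneg_left hlow hRpos.le
  have h3 : (1/s + γ + 2*γ^2*s) * (s - γ*s^2) = (1+γ*s+2*γ^2*s^2) * (1-γ*s) := by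
    field_simp
  nlinarith [sq_nonneg (γ*s), mul_nonneg (mul_nonneg (sq_nonneg (γ*s)) hγ.le) hs.le]

/-! ### Telescoping sums -/

lemma log_diff_ge {p q : ℝ} (hp : 1 ≤ p) (hpq : p ≤ q) (hq2 : q ≤ 2*p) :
    (q - p)/(2*p) ≤ Real.log q - Real.log p := by
  have hp0 : 0 < p := by linarith
  have hq0 : 0 < q := by linarith
  rw [← Real.log_div hq0.ne' hp0.ne']
  have h1 : Real.log (p/q) ≤ p/q - 1 := Real.log_le_sub_one_of_pos (by positivity)
  have h2 : Real.log (q/p) = - Real.log (p/q) := by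
    rw [← Real.log_inv]; congr 1; field_simp
  have h3 : 1 - p/q ≤ Real.log (q/p) := by rw [h2]; linarith
  have h4 : (q-p)/(2*p) ≤ 1 - p/q := by
    rw [div_le_iff₀ (by positivity)]
    have he : (1 - p/q) * (2*p) = 2*p*(q-p)/q := by field_simp
    rw [he, le_div_iff₀ hq0]
    nlinarith
  linarith

lemma log_diff_le {p q : ℝ} (hp : 0 < p) (hpq : p ≤ q) :
    Real.log q - Real.log p ≤ (q - p)/p := by
  have hq0 : 0 < q := by linarith
  rw [← Real.log_div hq0.ne' hp.ne']
  have h1 : Real.log (q/p) ≤ q/p - 1 := Real.log_le_sub_one_of_pos (by positivity)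
  have h2 : q/p - 1 = (q-p)/p := by field_simp
  linarith

lemma sum_inv_linear_le {e s : ℝ} (he : 0 < e) (hs : 0 < s) (hes : e * s ≤ 1) (m : ℕ) :
    ∑ j ∈ Finset.range m, s/(1+e*j*s) ≤ (2/e) * Real.log (1+e*m*s) := by
  induction m with
  | zero => simp
  | succ m ih =>
    rw [Finset.sum_range_succ]
    have hp : (1:ℝ) ≤ 1+e*m*s := by
      have : (0:ℝ) ≤ e*m*s := by positivity
      linarith
    have hpq : (1+e*(m:ℝ)*s) ≤ 1+e*((m:ℝ)+1)*s := by nlinarith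
    have hq2 : (1+e*((m:ℝ)+1)*s) ≤ 2*(1+e*(m:ℝ)*s) := by nlinarith [mul_nonneg (mul_nonneg he.le (Nat.cast_nonneg m : (0:ℝ) ≤ m)) hs.le]
    have hd := log_diff_ge hp hpq hq2
    have hdiff : ((1+e*((m:ℝ)+1)*s) - (1+e*(m:ℝ)*s)) = e*s := by ring
    rw [hdiff] at hd
    have h2 : s/(1+e*(m:ℝ)*s) = (2/e) * (e*s/(2*(1+e*(m:ℝ)*s))) := by
      field_simp
    have key : s/(1+e*(m:ℝ)*s) ≤ (2/e) * (Real.log (1+e*((m:ℝ)+1)*s) - Real.log (1+e*(m:ℝ)*s)) := by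
      rw [h2]; exact mul_le_mul_of_nonneg_left hd (by positivity)
    have hcast : (((m+1:ℕ)):ℝ) = (m:ℝ)+1 := by push_cast; ring
    rw [hcast]
    linarith [ih]

lemma sum_inv_linear_ge {e s : ℝ} (he : 0 < e) (hs : 0 < s) (n : ℕ) :
    (1/e) * Real.log (1+e*n*s) ≤ ∑ m ∈ Finset.range n, s/(1+e*m*s) := by
  induction n with
  | zero => simp
  | succ n ih =>
    rw [Finset.sum_range_succ]
    have hp : (0:ℝ) < 1+e*n*s := by positivity
    have hpq : (1+e*(n:ℝ)*s) ≤ 1+e*((n:ℝ)+1)*s := by nlinarith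
    have hd := log_diff_le hp hpq
    have hdiff : ((1+e*((n:ℝ)+1)*s) - (1+e*(n:ℝ)*s)) = e*s := by ring
    rw [hdiff] at hd
    have key : (1/e) * (Real.log (1+e*((n:ℝ)+1)*s) - Real.log (1+e*(n:ℝ)*s)) ≤ s/(1+e*(n:ℝ)*s) := by
      have h2 : (1/e) * (e*s/(1+e*(n:ℝ)*s)) = s/(1+e*(n:ℝ)*s) := by field_simp
      calc (1/e) * (Real.log (1+e*((n:ℝ)+1)*s) - Real.log (1+e*(n:ℝ)*s))
          ≤ (1/e) * (e*s/(1+e*(n:ℝ)*s)) := mul_le_mul_of_nonneg_left hd (by positivity)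
        _ = s/(1+e*(n:ℝ)*s) := h2
    have hcast : (((n+1:ℕ)):ℝ) = (n:ℝ)+1 := by push_cast; ring
    rw [hcast]
    linarith [ih]

lemma sqrt_diff_ge {p q : ℝ} (hp : 1 ≤ p) (hpq : p ≤ q) (hq2 : q ≤ (3/2)*p) :
    (q - p)/(3*p*Real.sqrt p) ≤ 1/Real.sqrt p - 1/Real.sqrt q := by
  have hp0 : 0 < p := by linarith
  have hq0 : 0 < q := by linarith
  have hsp : 0 < Real.sqrt p := Real.sqrt_pos.mpr hp0
  have hsq : 0 < Real.sqrt q := Real.sqrt_pos.mpr hq0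
  have hsp1 : 1 ≤ Real.sqrt p := by
    rw [show (1:ℝ) = Real.sqrt 1 by simp]; exact Real.sqrt_le_sqrt hp
  have hsqle : Real.sqrt q ≤ (5/4) * Real.sqrt p := by
    have h1 : Real.sqrt q ≤ Real.sqrt ((3/2)*p) := Real.sqrt_le_sqrt hq2
    have h2 : Real.sqrt ((3/2)*p) = Real.sqrt (3/2) * Real.sqrt p := Real.sqrt_mul (by norm_num) p
    have h3 : Real.sqrt (3/2) ≤ 5/4 := by
      rw [show (5:ℝ)/4 = Real.sqrt ((5/4)^2) by rw [Real.sqrt_sq (by norm_num)]]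
      exact Real.sqrt_le_sqrt (by norm_num)
    calc Real.sqrt q ≤ Real.sqrt (3/2) * Real.sqrt p := h1.trans_eq h2
      _ ≤ (5/4) * Real.sqrt p := mul_le_mul_of_nonneg_right h3 hsp.le
  have hsqp : Real.sqrt p ≤ Real.sqrt q := Real.sqrt_le_sqrt hpq
  have hfact : (Real.sqrt q - Real.sqrt p) * (Real.sqrt q + Real.sqrt p) = q - p := by
    have e1 : Real.sqrt q * Real.sqrt q = q := Real.mul_self_sqrt hq0.le
    have e2 : Real.sqrt p * Real.sqrt p = p := Real.mul_self_sqrt hp0.le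
    nlinarith [e1, e2]
  have hdenom_pos : (0:ℝ) < Real.sqrt q + Real.sqrt p := by positivity
  have hdiff_eq : 1/Real.sqrt p - 1/Real.sqrt q = (q - p)/(Real.sqrt p * Real.sqrt q * (Real.sqrt q + Real.sqrt p)) := by
    rw [← hfact]; field_simp
  rw [hdiff_eq]
  apply div_le_div_of_nonneg_left (by linarith) (by positivity)
  -- denominator: √p √q (√q + √p) ≤ 3 p √p
  calc Real.sqrt p * Real.sqrt q * (Real.sqrt q + Real.sqrt p)
      ≤ Real.sqrt p * ((5/4)*Real.sqrt p) * ((5/4)*Real.sqrt p + Real.sqrt p) := by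
        apply mul_le_mul
        · exact mul_le_mul_of_nonneg_left hsqle hsp.le
        · linarith
        · positivity
        · positivity
    _ = (45/16) * (Real.sqrt p * Real.sqrt p * Real.sqrt p) := by ring
    _ ≤ 3 * (p * Real.sqrt p) := by
        rw [Real.mul_self_sqrt hp0.le]
        nlinarith [Real.sqrt_nonneg p, hp0]
    _ = 3*p*Real.sqrt p := by ring

lemma sum_pow32_le {e s : ℝ} (he : 0 < e) (hs : 0 < s) (hes : e * s ≤ 1/2) (n : ℕ) :
    ∑ m ∈ Finset.range n, s^2/((1+e*m*s) * Real.sqrt (1+e*m*s)) ≤ 4*s/e := by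
  have key : ∀ m : ℕ, s^2/((1+e*m*s) * Real.sqrt (1+e*m*s))
      ≤ (4*s/e) * (1/Real.sqrt (1+e*m*s) - 1/Real.sqrt (1+e*(m+1:ℝ)*s)) := by
    intro m
    have hp : (1:ℝ) ≤ 1+e*m*s := by
      have : (0:ℝ) ≤ e*m*s := by positivity
      linarith
    have hpq : (1+e*(m:ℝ)*s) ≤ 1+e*((m:ℝ)+1)*s := by nlinarith
    have hq2 : (1+e*((m:ℝ)+1)*s) ≤ (3/2)*(1+e*(m:ℝ)*s) := by
      nlinarith [mul_nonneg (mul_nonneg he.le (Nat.cast_nonneg m : (0:ℝ) ≤ m)) hs.le]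
    have hd := sqrt_diff_ge hp hpq hq2
    have hdiff : ((1+e*((m:ℝ)+1)*s) - (1+e*(m:ℝ)*s)) = e*s := by ring
    rw [hdiff] at hd
    have h2 : (4*s/e) * (e*s/(3*(1+e*(m:ℝ)*s)*Real.sqrt (1+e*(m:ℝ)*s)))
        = (4/3) * (s^2/((1+e*(m:ℝ)*s)*Real.sqrt (1+e*(m:ℝ)*s))) := by
      have h3 : (0:ℝ) < 1+e*(m:ℝ)*s := by linarith
      have h4 : (0:ℝ) < Real.sqrt (1+e*(m:ℝ)*s) := Real.sqrt_pos.mpr h3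
      field_simp
    have hterm_nonneg : (0:ℝ) ≤ s^2/((1+e*(m:ℝ)*s)*Real.sqrt (1+e*(m:ℝ)*s)) := by positivity
    calc s^2/((1+e*(m:ℝ)*s) * Real.sqrt (1+e*(m:ℝ)*s))
        ≤ (4/3) * (s^2/((1+e*(m:ℝ)*s)*Real.sqrt (1+e*(m:ℝ)*s))) := by linarith
      _ = (4*s/e) * (e*s/(3*(1+e*(m:ℝ)*s)*Real.sqrt (1+e*(m:ℝ)*s))) := h2.symm
      _ ≤ (4*s/e) * (1/Real.sqrt (1+e*(m:ℝ)*s) - 1/Real.sqrt (1+e*((m:ℝ)+1)*s)) := by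
          apply mul_le_mul_of_nonneg_left _ (by positivity)
          calc e*s/(3*(1+e*(m:ℝ)*s)*Real.sqrt (1+e*(m:ℝ)*s))
              = e*s/(3*(1+e*(m:ℝ)*s)*Real.sqrt (1+e*(m:ℝ)*s)) := rfl
            _ ≤ _ := by
                have := hd
                rw [show 3*(1+e*(m:ℝ)*s)*Real.sqrt (1+e*(m:ℝ)*s) = 3*(1+e*(m:ℝ)*s)*Real.sqrt (1+e*(m:ℝ)*s) from rfl]
                linarith [hd]
  -- telescope
  have htel : ∑ m ∈ Finset.range n, (1/Real.sqrt (1+e*(m:ℝ)*s) - 1/Real.sqrt (1+e*((m:ℝ)+1)*s))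
      = 1/Real.sqrt (1+e*(0:ℝ)*s) - 1/Real.sqrt (1+e*(n:ℝ)*s) := by
    have := Finset.sum_range_sub' (f := fun m : ℕ => 1/Real.sqrt (1+e*(m:ℝ)*s)) n
    simpa using this
  calc ∑ m ∈ Finset.range n, s^2/((1+e*m*s) * Real.sqrt (1+e*m*s))
      ≤ ∑ m ∈ Finset.range n, (4*s/e) * (1/Real.sqrt (1+e*(m:ℝ)*s) - 1/Real.sqrt (1+e*((m:ℝ)+1)*s)) := by
        apply Finset.sum_le_sum; intro m _; exact key m
    _ = (4*s/e) * (1/Real.sqrt (1+e*(0:ℝ)*s) - 1/Real.sqrt (1+e*(n:ℝ)*s)) := by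
        rw [← Finset.mul_sum, htel]
    _ ≤ (4*s/e) * 1 := by
        apply mul_le_mul_of_nonneg_left _ (by positivity)
        have h0 : (1:ℝ)+e*(0:ℝ)*s = 1 := by ring
        rw [h0, Real.sqrt_one]
        have : 0 ≤ 1/Real.sqrt (1+e*(n:ℝ)*s) := by positivity
        linarith
    _ = 4*s/e := by ring
/-! ### The analytic bound on Hgen -/

lemma cast_mul_sub_one_nonneg (j : ℕ) : 0 ≤ (j:ℝ) * ((j:ℝ) - 1) := by
  rcases Nat.eq_zero_or_pos j with h|h
  · simp [h]
  · have h1 : (1:ℝ) ≤ j := by exact_mod_cast h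
    nlinarith [Nat.cast_nonneg (α := ℝ) j]

set_option maxHeartbeats 1000000 in
lemma Hgen_bound {a b : ℕ → ℝ} {β γ σ : ℝ}
    (ha : ∀ j, 0 ≤ a j) (haS : Summable a) (ha1 : ∑' j, a j = 1)
    (haM : Summable (fun j : ℕ => a j * j)) (haMean : ∑' j : ℕ, a j * j = 1)
    (haQ : Summable (fun j : ℕ => a j * ((j:ℝ) * ((j:ℝ)-1))))
    (hb : ∀ j, 0 ≤ b j) (hbS : Summable b) (hb1 : ∑' j, b j = 1)
    (hbM : Summable (fun j : ℕ => b j * j))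
    (hbQ : Summable (fun j : ℕ => b j * ((j:ℝ) * ((j:ℝ)-1))))
    (hβ : β = ∑' j : ℕ, b j * j) (hβpos : 0 < β)
    (hγ : γ = (1/2) * ∑' j : ℕ, a j * ((j:ℝ) * ((j:ℝ)-1))) (hγpos : 0 < γ)
    (hσ : σ = β / γ) :
    ∃ C₄ : ℝ, 1 ≤ C₄ ∧ ∃ s₀ : ℝ, 0 < s₀ ∧ s₀ ≤ 1/2 ∧
      ∀ (n : ℕ) (s : ℝ), 0 < s → s ≤ s₀ →
        Hgen a b n (1-s) ≤ C₄ * (1 + γ*n*s) ^ (-σ) := by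
  classical
  have hex : ∃ J : ℕ, a J * ((J:ℝ) * ((J:ℝ)-1)) ≠ 0 := by
    by_contra h
    push_neg at h
    have h0 : ∑' j : ℕ, a j * ((j:ℝ) * ((j:ℝ)-1)) = 0 := by
      have he : (fun j : ℕ => a j * ((j:ℝ) * ((j:ℝ)-1))) = fun _ => (0:ℝ) := funext h
      rw [he, tsum_zero]
    rw [h0] at hγ; norm_num at hγ; rw [hγ] at hγpos; norm_num at hγpos
  obtain ⟨J, hJne⟩ := hex
  have haJpos : 0 < a J := by
    rcases (ha J).lt_or_eq with h|h
    · exact h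
    · exact absurd (by rw [← h]; ring) hJne
  have hJ2 : 2 ≤ J := by
    by_contra h
    push_neg at h
    interval_cases J <;> norm_num at hJne
  set cJ : ℝ := min (a J) γ with hcJdef
  have hcJpos : 0 < cJ := lt_min haJpos hγpos
  have hcJγ : cJ ≤ γ := min_le_right _ _
  have hcJa : cJ ≤ a J := min_le_left _ _
  set s₀ : ℝ := min (1/2) (1/(2*γ)) with hs₀def
  have hs₀pos : 0 < s₀ := lt_min (by norm_num) (by positivity)
  have hs₀half : s₀ ≤ 1/2 := min_le_left _ _
  have hγs₀ : γ * s₀ ≤ 1/2 := by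
    calc γ * s₀ ≤ γ * (1/(2*γ)) := mul_le_mul_of_nonneg_left (min_le_right _ _) hγpos.le
      _ = 1/2 := by field_simp
  set γB : ℝ := (1/2) * ∑' j : ℕ, b j * ((j:ℝ) * ((j:ℝ)-1)) with hγBdef
  have hγB0 : 0 ≤ γB := by
    apply mul_nonneg (by norm_num)
    exact tsum_nonneg fun j => mul_nonneg (hb j) (cast_mul_sub_one_nonneg j)
  set C_E : ℝ := 4*γ^2/cJ with hCEdef
  have hCE0 : 0 ≤ C_E := by positivity
  set C_corr : ℝ := 8*C_E*s₀/γ with hCcorrdef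
  have hCcorr0 : 0 ≤ C_corr := by positivity
  set C_sq : ℝ := 4*s₀/cJ with hCsqdef
  have hCsq0 : 0 ≤ C_sq := by positivity
  refine ⟨Real.exp (β*C_corr + γB*C_sq), Real.one_le_exp (by positivity), s₀, hs₀pos, hs₀half, ?_⟩
  intro n s hs hss₀
  have hs1 : s ≤ 1 := le_trans hss₀ (by linarith)
  have hγs : γ * s ≤ 1/2 := le_trans (mul_le_mul_of_nonneg_left hss₀ hγpos.le) hγs₀
  have hcs : cJ * s ≤ 1/2 := le_trans (mul_le_mul_of_nonneg_right hcJγ hs.le) hγs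
  -- the trajectory
  obtain ⟨S, hS0, hSrec, hiter⟩ : ∃ S : ℕ → ℝ, S 0 = s ∧
      (∀ m, S (m+1) = 1 - pgf a (1 - S m)) ∧
      (∀ m, (pgf a)^[m] (1-s) = 1 - S m) := by
    refine ⟨fun m => 1 - (pgf a)^[m] (1-s), by simp, ?_, fun m => by simp⟩
    intro m
    simp only [Function.iterate_succ_apply', sub_sub_cancel]
  have hstep : ∀ t : ℝ, 0 < t → t ≤ s₀ →
      t - γ*t^2 ≤ 1 - pgf a (1-t) ∧ 1 - pgf a (1-t) ≤ t ∧ 0 < 1 - pgf a (1-t) ∧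
        a J * t^2 ≤ t - (1 - pgf a (1-t)) := by
    intro t ht0 hts₀
    have ht1 : t ≤ 1 := le_trans hts₀ (by linarith)
    have hγt : γ * t ≤ 1/2 := le_trans (mul_le_mul_of_nonneg_left hts₀ hγpos.le) hγs₀
    have hup : 1 - pgf a (1-t) ≤ t := by
      have := one_sub_pgf_le ha haS ha1 haM ht0.le ht1
      rw [haMean] at this; linarith
    have hlow : t - γ*t^2 ≤ 1 - pgf a (1-t) := by
      have h := one_sub_pgf_ge ha haS ha1 haM haQ ht0.le ht1
      rw [haMean] at h
      have hγ2 : (∑' j : ℕ, a j * ((j:ℝ) * ((j:ℝ)-1))) / 2 = γ := by rw [hγ]; ring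
      rw [hγ2] at h; linarith
    have hpos : 0 < 1 - pgf a (1-t) := by
      nlinarith [mul_le_mul_of_nonneg_right hγt ht0.le]
    have hgap := pgf_gap ha haS ha1 haM haMean hJ2 haJpos ht0.le ht1
    exact ⟨hlow, hup, hpos, hgap⟩
  have hSbound : ∀ m, 0 < S m ∧ S m ≤ s := by
    intro m
    induction m with
    | zero => rw [hS0]; exact ⟨hs, le_refl s⟩
    | succ m ih =>
      have hts₀ : S m ≤ s₀ := le_trans ih.2 hss₀
      obtain ⟨hlow, hup, hpos, -⟩ := hstep (S m) ih.1 hts₀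
      rw [hSrec m]
      exact ⟨hpos, le_trans hup ih.2⟩
  have hrecip_low : ∀ m : ℕ, 1/s + cJ*m ≤ 1/(S m) := by
    intro m
    induction m with
    | zero => rw [hS0]; simp
    | succ m ih =>
      obtain ⟨hpos, hle⟩ := hSbound m
      have hts₀ : S m ≤ s₀ := le_trans hle hss₀
      obtain ⟨hlow, hup, hupos, hgap⟩ := hstep (S m) hpos hts₀
      have hgap' : cJ * (S m)^2 ≤ S m - (1 - pgf a (1 - S m)) := by
        have h := mul_le_mul_of_nonneg_right hcJa (sq_nonneg (S m))
        linarith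
      have hk := recip_step_low hcJpos.le hpos hupos hup hgap'
      rw [hSrec m]
      push_cast
      linarith
  have hS_le_frac : ∀ m : ℕ, S m ≤ s/(1+cJ*m*s) := by
    intro m
    have hden : (0:ℝ) < 1/s + cJ*m := by positivity
    have h1 : 1/(1/(S m)) ≤ 1/(1/s + cJ*m) :=
      one_div_le_one_div_of_le hden (hrecip_low m)
    rw [one_div_one_div] at h1
    have h2 : 1/(1/s + cJ*(m:ℝ)) = s/(1+cJ*m*s) := by
      rw [div_eq_div_iff (by positivity) (by positivity)]
      field_simp
    rwa [h2] at h1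
  have hrecip_high : ∀ m : ℕ,
      1/(S m) ≤ 1/s + γ*m + ∑ j ∈ Finset.range m, 2*γ^2 * S j := by
    intro m
    induction m with
    | zero => rw [hS0]; simp
    | succ m ih =>
      obtain ⟨hpos, hle⟩ := hSbound m
      have hts₀ : S m ≤ s₀ := le_trans hle hss₀
      obtain ⟨hlow, hup, hupos, -⟩ := hstep (S m) hpos hts₀
      have hγt : γ * S m ≤ 1/2 :=
        le_trans (mul_le_mul_of_nonneg_left hts₀ hγpos.le) hγs₀
      have hk := recip_step_high hγpos hpos hγt hlow
      rw [hSrec m, Finset.sum_range_succ]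
      push_cast
      linarith
  have hEsum : ∀ m : ℕ, ∑ j ∈ Finset.range m, 2*γ^2 * S j ≤ C_E * Real.log (1+γ*m*s) := by
    intro m
    have h1 : ∑ j ∈ Finset.range m, 2*γ^2 * S j
        ≤ ∑ j ∈ Finset.range m, 2*γ^2 * (s/(1+cJ*j*s)) :=
      Finset.sum_le_sum fun j _ => mul_le_mul_of_nonneg_left (hS_le_frac j) (by positivity)
    have h3 := sum_inv_linear_le hcJpos hs (by linarith) m
    have h4 : Real.log (1+cJ*m*s) ≤ Real.log (1+γ*m*s) := by
      apply Real.log_le_log (by positivity)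
      have h' : cJ*(m:ℝ)*s ≤ γ*(m:ℝ)*s :=
        mul_le_mul_of_nonneg_right (mul_le_mul_of_nonneg_right hcJγ (Nat.cast_nonneg m)) hs.le
      linarith
    have h5 : 2*γ^2 * ((2/cJ) * Real.log (1+cJ*m*s)) = C_E * Real.log (1+cJ*m*s) := by
      rw [hCEdef]; field_simp; ring
    calc ∑ j ∈ Finset.range m, 2*γ^2 * S j
        ≤ 2*γ^2 * ∑ j ∈ Finset.range m, s/(1+cJ*j*s) := by rw [Finset.mul_sum]; exact h1
      _ ≤ 2*γ^2 * ((2/cJ) * Real.log (1+cJ*m*s)) :=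
          mul_le_mul_of_nonneg_left h3 (by positivity)
      _ = C_E * Real.log (1+cJ*m*s) := h5
      _ ≤ C_E * Real.log (1+γ*m*s) := mul_le_mul_of_nonneg_left h4 hCE0
  have hsum_low : (1/γ) * Real.log (1+γ*n*s) - C_corr ≤ ∑ m ∈ Finset.range n, S m := by
    have hterm : ∀ m : ℕ,
        s/(1+γ*m*s) - (C_E * Real.log (1+γ*m*s)) * (s^2/(1+γ*m*s)^2) ≤ S m := by
      intro m
      set E : ℝ := ∑ j ∈ Finset.range m, 2*γ^2 * S j with hEdef
      have hE0 : 0 ≤ E := Finset.sum_nonneg fun j _ =>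
        mul_nonneg (by positivity) (hSbound j).1.le
      set X : ℝ := 1/s + γ*m with hXdef
      have hX0 : 0 < X := by rw [hXdef]; positivity
      have h1 : 1/(S m) ≤ X + E := hrecip_high m
      have hXE : 0 < X + E := by linarith
      have h2 : 1/(X+E) ≤ S m := by
        have h2' := one_div_le_one_div_of_le (one_div_pos.mpr (hSbound m).1) h1
        rwa [one_div_one_div] at h2'
      have h3 : 1/X - E/X^2 ≤ 1/(X+E) := by
        have heq : 1/(X+E) - (1/X - E/X^2) = E^2/(X^2*(X+E)) := by
          field_simp; ring
        nlinarith [div_nonneg (sq_nonneg E) (by positivity : (0:ℝ) ≤ X^2*(X+E)), heq]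
      have hX : X = (1+γ*m*s)/s := by
        rw [hXdef]; field_simp
      have h4 : 1/X = s/(1+γ*m*s) := by rw [hX, one_div_div]
      have h5 : E/X^2 = E * (s^2/(1+γ*m*s)^2) := by
        rw [hX, div_pow, div_div_eq_mul_div, mul_div_assoc]
      have h6 : E * (s^2/(1+γ*m*s)^2) ≤ (C_E * Real.log (1+γ*m*s)) * (s^2/(1+γ*m*s)^2) :=
        mul_le_mul_of_nonneg_right (hEsum m) (by positivity)
      have h7 : 1/X - E/X^2 ≤ S m := le_trans h3 h2
      rw [h4, h5] at h7
      linarith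
    have hlog32 : ∀ m : ℕ, (C_E * Real.log (1+γ*m*s)) * (s^2/(1+γ*m*s)^2)
        ≤ 2*C_E * (s^2/((1+γ*m*s)*Real.sqrt (1+γ*m*s))) := by
      intro m
      set P : ℝ := 1+γ*m*s with hPdef
      have hP1 : (1:ℝ) ≤ P := by
        have : (0:ℝ) ≤ γ*m*s := by positivity
        rw [hPdef]; linarith
      have hP0 : (0:ℝ) < P := by linarith
      have hsP : 0 < Real.sqrt P := Real.sqrt_pos.mpr hP0
      have hlog : Real.log P ≤ 2 * Real.sqrt P := by
        have h1 : Real.log (Real.sqrt P) = Real.log P / 2 := Real.log_sqrt hP0.le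
        have h2 : Real.log (Real.sqrt P) ≤ Real.sqrt P - 1 :=
          Real.log_le_sub_one_of_pos hsP
        nlinarith
      have hkey : Real.sqrt P * (s^2/P^2) = s^2/(P*Real.sqrt P) := by
        have hss : Real.sqrt P * Real.sqrt P = P := Real.mul_self_sqrt hP0.le
        rw [eq_div_iff (by positivity : (0:ℝ) < P*Real.sqrt P).ne']
        calc Real.sqrt P * (s^2/P^2) * (P*Real.sqrt P)
            = (Real.sqrt P * Real.sqrt P) * P * (s^2/P^2) := by ring
          _ = P^2 * (s^2/P^2) := by rw [hss]; ring
          _ = s^2 := by field_simp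
      calc (C_E * Real.log P) * (s^2/P^2)
          ≤ (C_E * (2*Real.sqrt P)) * (s^2/P^2) := by
            apply mul_le_mul_of_nonneg_right _ (by positivity)
            exact mul_le_mul_of_nonneg_left hlog hCE0
        _ = 2*C_E * (Real.sqrt P * (s^2/P^2)) := by ring
        _ = 2*C_E * (s^2/(P*Real.sqrt P)) := by rw [hkey]
    have hcorr : ∑ m ∈ Finset.range n, (C_E * Real.log (1+γ*m*s)) * (s^2/(1+γ*m*s)^2)
        ≤ C_corr := by
      calc ∑ m ∈ Finset.range n, (C_E * Real.log (1+γ*m*s)) * (s^2/(1+γ*m*s)^2)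
          ≤ ∑ m ∈ Finset.range n, 2*C_E * (s^2/((1+γ*m*s)*Real.sqrt (1+γ*m*s))) :=
            Finset.sum_le_sum fun m _ => hlog32 m
        _ = 2*C_E * ∑ m ∈ Finset.range n, s^2/((1+γ*m*s)*Real.sqrt (1+γ*m*s)) := by
            rw [Finset.mul_sum]
        _ ≤ 2*C_E * (4*s/γ) :=
            mul_le_mul_of_nonneg_left (sum_pow32_le hγpos hs hγs n) (by positivity)
        _ ≤ C_corr := by
            rw [hCcorrdef]
            have heq : 2*C_E*(4*s/γ) = 8*C_E*s/γ := by ring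
            have hle : 8*C_E*s/γ ≤ 8*C_E*s₀/γ :=
              (div_le_div_iff_of_pos_right hγpos).mpr (by nlinarith)
            rw [heq]; exact hle
    have h8 : ∑ m ∈ Finset.range n,
        (s/(1+γ*m*s) - (C_E * Real.log (1+γ*m*s)) * (s^2/(1+γ*m*s)^2))
        ≤ ∑ m ∈ Finset.range n, S m := Finset.sum_le_sum fun m _ => hterm m
    rw [Finset.sum_sub_distrib] at h8
    linarith [sum_inv_linear_ge hγpos hs n]
  have hsum_sq : ∑ m ∈ Finset.range n, (S m)^2 ≤ C_sq := by
    have hterm : ∀ m : ℕ, (S m)^2 ≤ s^2/((1+cJ*m*s)*Real.sqrt (1+cJ*m*s)) := by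
      intro m
      set P : ℝ := 1+cJ*m*s with hPdef
      have hP1 : (1:ℝ) ≤ P := by
        have : (0:ℝ) ≤ cJ*m*s := by positivity
        rw [hPdef]; linarith
      have hP0 : (0:ℝ) < P := by linarith
      have h1 : (S m)^2 ≤ (s/P)^2 := by
        apply pow_le_pow_left₀ (hSbound m).1.le (hS_le_frac m)
      have h2 : (s/P)^2 = s^2/P^2 := div_pow s P 2
      have hsqle : Real.sqrt P ≤ P := by
        have := Real.sqrt_le_sqrt (by nlinarith : P ≤ P^2)
        rwa [Real.sqrt_sq hP0.le] at this
      have h3 : s^2/P^2 ≤ s^2/(P*Real.sqrt P) := by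
        apply div_le_div_of_nonneg_left (sq_nonneg s) (by positivity)
        calc P*Real.sqrt P ≤ P*P := mul_le_mul_of_nonneg_left hsqle hP0.le
          _ = P^2 := by ring
      calc (S m)^2 ≤ (s/P)^2 := h1
        _ = s^2/P^2 := h2
        _ ≤ s^2/(P*Real.sqrt P) := h3
    calc ∑ m ∈ Finset.range n, (S m)^2
        ≤ ∑ m ∈ Finset.range n, s^2/((1+cJ*m*s)*Real.sqrt (1+cJ*m*s)) :=
          Finset.sum_le_sum fun m _ => hterm m
      _ ≤ 4*s/cJ := sum_pow32_le hcJpos hs hcs n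
      _ ≤ C_sq := by
          rw [hCsqdef]
          exact (div_le_div_iff_of_pos_right hcJpos).mpr (by nlinarith)
  -- assemble
  have hXpos : (0:ℝ) < 1 + γ*n*s := by positivity
  have hprod : Hgen a b n (1-s) = ∏ m ∈ Finset.range n, pgf b (1 - S m) := by
    rw [Hgen]; exact Finset.prod_congr rfl fun m _ => by rw [hiter m]
  have hfac : ∀ m : ℕ, pgf b (1 - S m) ≤ Real.exp (-(β * S m - γB * (S m)^2)) := by
    intro m
    obtain ⟨hpos, hle⟩ := hSbound m
    have ht1 : S m ≤ 1 := le_trans hle hs1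
    have h := one_sub_pgf_ge hb hbS hb1 hbM hbQ hpos.le ht1
    have hβ2 : (∑' j : ℕ, b j * (j:ℝ)) * S m = β * S m := by rw [hβ]
    have hγB2 : (∑' j : ℕ, b j * ((j:ℝ) * ((j:ℝ)-1))) / 2 = γB := by rw [hγBdef]; ring
    rw [hβ2, hγB2] at h
    have hexp := Real.add_one_le_exp (-(β * S m - γB * (S m)^2))
    linarith
  have hfac_nonneg : ∀ m : ℕ, 0 ≤ pgf b (1 - S m) := by
    intro m
    obtain ⟨hpos, hle⟩ := hSbound m
    exact pgf_nonneg hb (by linarith [le_trans hle hs1])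
  have hHle : Hgen a b n (1-s) ≤ Real.exp (∑ m ∈ Finset.range n, -(β*S m - γB*(S m)^2)) := by
    rw [hprod, Real.exp_sum]
    exact Finset.prod_le_prod (fun m _ => hfac_nonneg m) (fun m _ => hfac m)
  have hsum_eq : ∑ m ∈ Finset.range n, -(β*S m - γB*(S m)^2)
      = γB * (∑ m ∈ Finset.range n, (S m)^2) - β * (∑ m ∈ Finset.range n, S m) := by
    rw [Finset.mul_sum, Finset.mul_sum, ← Finset.sum_sub_distrib]
    exact Finset.sum_congr rfl fun m _ => by ring
  have hexp_le : ∑ m ∈ Finset.range n, -(β*S m - γB*(S m)^2)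
      ≤ (β*C_corr + γB*C_sq) + (-(β/γ) * Real.log (1+γ*n*s)) := by
    rw [hsum_eq]
    have h1 : γB * (∑ m ∈ Finset.range n, (S m)^2) ≤ γB * C_sq :=
      mul_le_mul_of_nonneg_left hsum_sq hγB0
    have h2 : β * ((1/γ) * Real.log (1+γ*n*s) - C_corr) ≤ β * (∑ m ∈ Finset.range n, S m) :=
      mul_le_mul_of_nonneg_left hsum_low hβpos.le
    have h3 : β * ((1/γ) * Real.log (1+γ*n*s) - C_corr)
        = (β/γ) * Real.log (1+γ*n*s) - β*C_corr := by ring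
    linarith
  have hrpow : (1 + γ*(n:ℝ)*s) ^ (-σ) = Real.exp (-(β/γ) * Real.log (1+γ*n*s)) := by
    rw [Real.rpow_def_of_pos hXpos, hσ]
    congr 1
    ring
  calc Hgen a b n (1-s)
      ≤ Real.exp (∑ m ∈ Finset.range n, -(β*S m - γB*(S m)^2)) := hHle
    _ ≤ Real.exp ((β*C_corr + γB*C_sq) + (-(β/γ) * Real.log (1+γ*n*s))) :=
        Real.exp_le_exp.mpr hexp_le
    _ = Real.exp (β*C_corr + γB*C_sq) * Real.exp (-(β/γ) * Real.log (1+γ*n*s)) :=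
        Real.exp_add _ _
    _ = Real.exp (β*C_corr + γB*C_sq) * (1 + γ*n*s) ^ (-σ) := by rw [hrpow]
/-! ### Probability helpers -/

section Prob

variable {Ω : Type} [MeasureSpace Ω]

lemma gwi_pairwise_fiber (w : Ω → ℕ) :
    Pairwise (Function.onFun Disjoint fun m : ℕ => {ω' : Ω | w ω' = m}) := by
  intro i j hij
  simp only [Function.onFun]
  apply Set.disjoint_left.mpr
  intro ω h1 h2
  exact hij (by rw [← h1, ← h2])

lemma gwi_iUnion_fiber (w : Ω → ℕ) : (⋃ m : ℕ, {ω' : Ω | w ω' = m}) = Set.univ := by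
  ext ω; simp

lemma gwi_measurableSet_fiber {w : Ω → ℕ} (hw : Measurable w) (m : ℕ) :
    MeasurableSet {ω' : Ω | w ω' = m} :=
  hw (measurableSet_singleton m)

lemma lintegral_partition {w : Ω → ℕ} (hw : Measurable w) (f : Ω → ℝ≥0∞) :
    ∫⁻ ω, f ω ∂ℙ = ∑' m : ℕ, ∫⁻ ω in {ω' | w ω' = m}, f ω ∂ℙ := by
  conv_lhs => rw [← setLIntegral_univ, ← gwi_iUnion_fiber w]
  exact lintegral_iUnion (gwi_measurableSet_fiber hw) (gwi_pairwise_fiber w) f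

lemma lintegral_comp_nat {w : Ω → ℕ} (hw : Measurable w) (φ : ℕ → ℝ≥0∞) :
    ∫⁻ ω, φ (w ω) ∂ℙ = ∑' m : ℕ, φ m * ℙ {ω' | w ω' = m} := by
  rw [lintegral_partition hw (fun ω => φ (w ω))]
  apply tsum_congr; intro m
  rw [setLIntegral_congr_fun (gwi_measurableSet_fiber hw m)
    (fun ω (hω : w ω = m) => by rw [hω])]
  exact setLIntegral_const _ _

lemma dist_summable_sum_one [IsProbabilityMeasure (ℙ : Measure Ω)]
    {w : Ω → ℕ} (hw : Measurable w) {c : ℕ → ℝ}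
    (hdist : ∀ j, (ℙ {ω' | w ω' = j}).toReal = c j) :
    Summable c ∧ ∑' j, c j = 1 := by
  have hsum : ∑' j : ℕ, ℙ {ω' | w ω' = j} = 1 := by
    rw [← measure_iUnion (f := fun m : ℕ => {ω' : Ω | w ω' = m}) (gwi_pairwise_fiber w)
      (gwi_measurableSet_fiber hw), gwi_iUnion_fiber, measure_univ]
  constructor
  · exact (ENNReal.summable_toReal (by rw [hsum]; exact ENNReal.one_ne_top)).congr
      (fun j => hdist j)
  · calc ∑' j, c j = ∑' j, (ℙ {ω' | w ω' = j}).toReal := tsum_congr fun j => (hdist j).symm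
      _ = (∑' j, ℙ {ω' | w ω' = j}).toReal :=
          (ENNReal.tsum_toReal_eq (fun j => measure_ne_top _ _)).symm
      _ = 1 := by rw [hsum]; exact ENNReal.toReal_one

lemma lintegral_pow_dist [IsProbabilityMeasure (ℙ : Measure Ω)]
    {w : Ω → ℕ} (hw : Measurable w) {c : ℕ → ℝ} (hc : ∀ j, 0 ≤ c j) (hcS : Summable c)
    (hdist : ∀ j, (ℙ {ω' | w ω' = j}) = ENNReal.ofReal (c j))
    {x : ℝ} (hx0 : 0 ≤ x) (hx1 : x ≤ 1) :
    ∫⁻ ω, ENNReal.ofReal x ^ (w ω) ∂ℙ = ENNReal.ofReal (pgf c x) := by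
  rw [lintegral_comp_nat hw (fun j => ENNReal.ofReal x ^ j), pgf,
    ENNReal.ofReal_tsum_of_nonneg (fun j => mul_nonneg (hc j) (pow_nonneg hx0 j))
      (summable_pgf hc hcS hx0 hx1)]
  apply tsum_congr; intro j
  rw [hdist j, show c j * x ^ j = x ^ j * c j from mul_comm _ _,
    ENNReal.ofReal_mul (pow_nonneg hx0 j), ENNReal.ofReal_pow hx0]

lemma indep_of_disjoint_coords [IsProbabilityMeasure (ℙ : Measure Ω)]
    {ι' : Type*} {F : ι' → Ω → ℕ}
    (hmeas : ∀ i, Measurable (F i))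
    (hind : iIndepFun (m := fun _ : ι' => (inferInstance : MeasurableSpace ℕ)) F ℙ)
    {S T : Set ι'} (hST : Disjoint S T) :
    Indep (⨆ i ∈ S, MeasurableSpace.comap (F i) inferInstance)
          (⨆ i ∈ T, MeasurableSpace.comap (F i) inferInstance) ℙ := by
  have h := ProbabilityTheory.indep_biSup_compl (fun i => (hmeas i).comap_le) hind.iIndep S
  refine indep_of_indep_of_le_right h (biSup_mono fun i hi => ?_)
  exact Set.disjoint_right.mp hST hi

lemma measurable_coord_of_mem {ι' : Type*} {F : ι' → Ω → ℕ} {S : Set ι'} {i : ι'}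
    (hi : i ∈ S) :
    Measurable[⨆ j ∈ S, MeasurableSpace.comap (F j) inferInstance] (F i) :=
  (Measurable.of_comap_le le_rfl).mono
    (le_biSup (fun j => MeasurableSpace.comap (F j) inferInstance) hi) le_rfl

lemma lintegral_mul_of_disjoint_coords [IsProbabilityMeasure (ℙ : Measure Ω)]
    {ι' : Type*} {F : ι' → Ω → ℕ}
    (hmeas : ∀ i, Measurable (F i))
    (hind : iIndepFun (m := fun _ : ι' => (inferInstance : MeasurableSpace ℕ)) F ℙ)
    {S T : Set ι'} (hST : Disjoint S T) {f g : Ω → ℝ≥0∞}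
    (hf : Measurable[⨆ i ∈ S, MeasurableSpace.comap (F i) inferInstance] f)
    (hg : Measurable[⨆ i ∈ T, MeasurableSpace.comap (F i) inferInstance] g) :
    ∫⁻ ω, f ω * g ω ∂ℙ = (∫⁻ ω, f ω ∂ℙ) * ∫⁻ ω, g ω ∂ℙ :=
  ProbabilityTheory.lintegral_mul_eq_lintegral_mul_lintegral_of_independent_measurableSpace
    (iSup₂_le fun i _ => (hmeas i).comap_le) (iSup₂_le fun i _ => (hmeas i).comap_le)
    (indep_of_disjoint_coords hmeas hind hST) hf hg

lemma measurable_sum_range {m' : MeasurableSpace Ω} {f : Ω → ℕ} {g : ℕ → Ω → ℕ}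
    (hf : Measurable[m'] f) (hg : ∀ i, Measurable[m'] (g i)) :
    Measurable[m'] (fun ω => ∑ i ∈ Finset.range (f ω), g i ω) := by
  apply measurable_to_countable'
  intro c
  have heq : (fun ω => ∑ i ∈ Finset.range (f ω), g i ω) ⁻¹' {c}
      = ⋃ m : ℕ, ({ω | f ω = m} ∩ {ω | ∑ i ∈ Finset.range m, g i ω = c}) := by
    ext ω
    simp only [Set.mem_preimage, Set.mem_singleton_iff, Set.mem_iUnion, Set.mem_inter_iff,
      Set.mem_setOf_eq]
    constructor
    · intro h; exact ⟨f ω, rfl, by rw [h]⟩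
    · rintro ⟨m, hm, hc⟩; rw [hm]; exact hc
  rw [heq]
  apply MeasurableSet.iUnion
  intro m
  exact (hf (measurableSet_singleton m)).inter
    ((Finset.measurable_sum _ (fun i _ => hg i)) (measurableSet_singleton c))

end Prob

/-! ### Hgen recursion and positivity -/

lemma Hgen_succ (a b : ℕ → ℝ) (n : ℕ) (x : ℝ) :
    Hgen a b (n+1) x = Hgen a b n (pgf a x) * pgf b x := by
  rw [Hgen, Hgen, Finset.prod_range_succ']
  congr 1

lemma iterate_pgf_mem {a : ℕ → ℝ} (ha : ∀ j, 0 ≤ a j) (haS : Summable a)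
    (ha1 : ∑' j, a j = 1) (m : ℕ) {x : ℝ} (hx0 : 0 ≤ x) (hx1 : x ≤ 1) :
    0 ≤ (pgf a)^[m] x ∧ (pgf a)^[m] x ≤ 1 := by
  induction m with
  | zero => exact ⟨hx0, hx1⟩
  | succ m ih =>
    rw [Function.iterate_succ_apply']
    exact ⟨pgf_nonneg ha ih.1, pgf_le_one ha haS ha1 ih.1 ih.2⟩

lemma Hgen_nonneg {a b : ℕ → ℝ} (ha : ∀ j, 0 ≤ a j) (haS : Summable a)
    (ha1 : ∑' j, a j = 1) (hb : ∀ j, 0 ≤ b j) (n : ℕ) {x : ℝ} (hx0 : 0 ≤ x) (hx1 : x ≤ 1) :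
    0 ≤ Hgen a b n x := by
  rw [Hgen]
  exact Finset.prod_nonneg fun m _ =>
    pgf_nonneg hb (iterate_pgf_mem ha haS ha1 m hx0 hx1).1

/-! ### Summability transfers -/

lemma summable_sq_of_sq_log {c : ℕ → ℝ} (hc : ∀ j, 0 ≤ c j)
    (h : Summable (fun j : ℕ => c j * (j:ℝ) ^ 2 * Real.log j)) :
    Summable (fun j : ℕ => c j * (j:ℝ) ^ 2) := by
  rw [← summable_nat_add_iff 3]
  have h3 : Summable (fun j : ℕ => c (j+3) * ((j+3 : ℕ):ℝ) ^ 2 * Real.log ((j+3 : ℕ):ℝ)) :=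
    (summable_nat_add_iff 3).mpr h
  apply Summable.of_nonneg_of_le _ _ h3
  · intro j
    exact mul_nonneg (hc _) (by positivity)
  · intro j
    have hlog : 1 ≤ Real.log (((j+3 : ℕ)):ℝ) := by
      rw [Real.le_log_iff_exp_le (by positivity)]
      have h1 : Real.exp 1 < 2.7182818286 := Real.exp_one_lt_d9
      have h2 : (3:ℝ) ≤ ((j+3 : ℕ):ℝ) := by
        push_cast
        linarith [Nat.cast_nonneg (α := ℝ) j]
      linarith
    exact le_mul_of_one_le_right (mul_nonneg (hc _) (by positivity)) hlog
/-! ### Block measurability helper -/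

lemma gwi_block_meas {Ω : Type} [MeasureSpace Ω] {X : ℕ → ℕ → Ω → ℕ} {Y : ℕ → Ω → ℕ}
    (ξ : ℝ≥0∞) (q m : ℕ) (S : Set ((ℕ × ℕ) ⊕ ℕ))
    (hX : ∀ i, i < m → Sum.inl (q, i+1) ∈ S) (hY : Sum.inr q ∈ S) :
    Measurable[⨆ i ∈ S, MeasurableSpace.comap
      (Sum.elim (fun p : ℕ × ℕ => X p.1 p.2) Y i) inferInstance]
      (fun ω => (∏ i ∈ Finset.range m, ξ ^ (X q (i+1) ω)) * ξ ^ (Y q ω)) := by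
  apply Measurable.mul
  · apply Finset.measurable_prod
    intro i hi
    exact measurable_from_top.comp
      (measurable_coord_of_mem (F := Sum.elim (fun p : ℕ × ℕ => X p.1 p.2) Y)
        (hX i (Finset.mem_range.mp hi)))
  · exact measurable_from_top.comp
      (measurable_coord_of_mem (F := Sum.elim (fun p : ℕ × ℕ => X p.1 p.2) Y) hY)

theorem stmt6
    {Ω : Type} [MeasureSpace Ω] (hprob : IsProbabilityMeasure (ℙ : Measure Ω))
    (X : ℕ → ℕ → Ω → ℕ) (Y : ℕ → Ω → ℕ) (Z : ℕ → Ω → ℕ)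
    (a b : ℕ → ℝ)
    (hXmeas : ∀ n i, Measurable (X n i)) (hYmeas : ∀ n, Measurable (Y n))
    (hXdist : ∀ n i j, (ℙ {ω | X n i ω = j}).toReal = a j)
    (hYdist : ∀ n j, (ℙ {ω | Y n ω = j}).toReal = b j)
    (hindep : iIndepFun (m := fun _ : (ℕ × ℕ) ⊕ ℕ => (inferInstance : MeasurableSpace ℕ))
      (Sum.elim (fun p : ℕ × ℕ => X p.1 p.2) Y) ℙ)
    (hZ0 : ∀ ω, Z 0 ω = 0)
    (hZrec : ∀ n ω, Z (n + 1) ω =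
      (∑ i ∈ Finset.range (Z n ω), X (n + 1) (i + 1) ω) + Y (n + 1) ω)
    (ha0 : 0 < a 0) (ha01 : a 0 < 1) (hb0 : 0 < b 0) (hb01 : b 0 < 1)
    (haMoment : Summable (fun j : ℕ => a j * j ^ 2 * Real.log j))
    (hbMoment : Summable (fun j : ℕ => b j * j ^ 2))
    (haMeanSummable : Summable (fun j : ℕ => a j * j))
    (haMean : ∑' j : ℕ, a j * j = 1)
    (β γ σ : ℝ)
    (hβ : β = ∑' j : ℕ, b j * j) (hβpos : 0 < β)
    (hγ : γ = (1 / 2) * ∑' j : ℕ, a j * ((j : ℝ) * ((j : ℝ) - 1)))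
    (hγpos : 0 < γ)
    (hσ : σ = β / γ)
    (k : ℕ → ℕ)
    (hkinf : Tendsto k atTop atTop)
    (hko : Tendsto (fun n : ℕ => (k n : ℝ) / n) atTop (𝓝 0)) :
    ∃ C₃ : ℝ, 0 < C₃ ∧ ∃ N : ℕ, ∀ n : ℕ, N ≤ n →
      (ℙ {ω | Z n ω ≤ k n}).toReal ≤ C₃ * (1 + γ * n / k n) ^ (-σ) := by
  haveI := hprob
  classical
  -- distribution facts
  obtain ⟨haS, ha1⟩ := dist_summable_sum_one (hXmeas 0 0) (hXdist 0 0)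
  obtain ⟨hbS, hb1⟩ := dist_summable_sum_one (hYmeas 0) (hYdist 0)
  have ha : ∀ j, 0 ≤ a j := fun j => (hXdist 0 0 j) ▸ ENNReal.toReal_nonneg
  have hb : ∀ j, 0 ≤ b j := fun j => (hYdist 0 j) ▸ ENNReal.toReal_nonneg
  have hXd : ∀ q i j, (ℙ {ω | X q i ω = j}) = ENNReal.ofReal (a j) := by
    intro q i j
    rw [← hXdist q i j, ENNReal.ofReal_toReal (measure_ne_top _ _)]
  have hYd : ∀ q j, (ℙ {ω | Y q ω = j}) = ENNReal.ofReal (b j) := by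
    intro q j
    rw [← hYdist q j, ENNReal.ofReal_toReal (measure_ne_top _ _)]
  -- summability facts
  have haSq : Summable (fun j : ℕ => a j * (j:ℝ)^2) := summable_sq_of_sq_log ha haMoment
  have haQ : Summable (fun j : ℕ => a j * ((j:ℝ) * ((j:ℝ)-1))) :=
    (haSq.sub haMeanSummable).congr (fun j => by push_cast; ring)
  have hbM : Summable (fun j : ℕ => b j * (j:ℝ)) := by
    apply Summable.of_nonneg_of_le (fun j => mul_nonneg (hb j) (Nat.cast_nonneg j))
      (fun j => ?_) hbMoment
    apply mul_le_mul_of_nonneg_left _ (hb j)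
    rcases Nat.eq_zero_or_pos j with h|h
    · simp [h]
    · have h1 : (1:ℝ) ≤ j := by exact_mod_cast h
      nlinarith
  have hbQ : Summable (fun j : ℕ => b j * ((j:ℝ) * ((j:ℝ)-1))) :=
    (hbMoment.sub hbM).congr (fun j => by push_cast; ring)
  -- filtration and measurability of Z
  have hFmeas : ∀ i : (ℕ × ℕ) ⊕ ℕ, Measurable (Sum.elim (fun p : ℕ × ℕ => X p.1 p.2) Y i) := by
    intro i; cases i with
    | inl p => exact hXmeas p.1 p.2
    | inr m => exact hYmeas m
  have hZM : ∀ n, Measurable[⨆ i ∈ {i : (ℕ × ℕ) ⊕ ℕ | Sum.elim Prod.fst id i ≤ n},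
      MeasurableSpace.comap (Sum.elim (fun p : ℕ × ℕ => X p.1 p.2) Y i) inferInstance] (Z n) := by
    intro n
    induction n with
    | zero =>
      have h0 : Z 0 = fun _ => 0 := funext hZ0
      rw [h0]; exact measurable_const
    | succ n ih =>
      have hfun : Z (n+1) = fun ω =>
          (∑ i ∈ Finset.range (Z n ω), X (n+1) (i+1) ω) + Y (n+1) ω := funext (hZrec n)
      rw [hfun]
      have hmono : (⨆ i ∈ {i : (ℕ × ℕ) ⊕ ℕ | Sum.elim Prod.fst id i ≤ n},
            MeasurableSpace.comap (Sum.elim (fun p : ℕ × ℕ => X p.1 p.2) Y i) inferInstance)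
          ≤ ⨆ i ∈ {i : (ℕ × ℕ) ⊕ ℕ | Sum.elim Prod.fst id i ≤ n+1},
            MeasurableSpace.comap (Sum.elim (fun p : ℕ × ℕ => X p.1 p.2) Y i) inferInstance :=
        biSup_mono fun i hi => le_trans hi (Nat.le_succ n)
      apply Measurable.add
      · apply measurable_sum_range (ih.mono hmono le_rfl)
        intro i
        exact measurable_coord_of_mem (F := Sum.elim (fun p : ℕ × ℕ => X p.1 p.2) Y)
          (i := Sum.inl (n+1, i+1)) (le_refl (n+1))
      · exact measurable_coord_of_mem (F := Sum.elim (fun p : ℕ × ℕ => X p.1 p.2) Y)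
          (i := Sum.inr (n+1)) (le_refl (n+1))
  have hZmeas : ∀ n, Measurable (Z n) := fun n =>
    (hZM n).mono (iSup₂_le fun i _ => (hFmeas i).comap_le) le_rfl
  -- the PGF identity
  have hkey : ∀ n : ℕ, ∀ x : ℝ, 0 ≤ x → x ≤ 1 →
      ∫⁻ ω, (ENNReal.ofReal x) ^ (Z n ω) ∂ℙ = ENNReal.ofReal (Hgen a b n x) := by
    intro n
    induction n with
    | zero =>
      intro x hx0 hx1
      have h0 : ∀ ω : Ω, (ENNReal.ofReal x) ^ (Z 0 ω) = 1 := fun ω => by rw [hZ0 ω, pow_zero]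
      rw [lintegral_congr h0, lintegral_one, measure_univ]
      simp [Hgen]
    | succ n IH =>
      intro x hx0 hx1
      have hAx0 : 0 ≤ pgf a x := pgf_nonneg ha hx0
      have hAx1 : pgf a x ≤ 1 := pgf_le_one ha haS ha1 hx0 hx1
      have hBx0 : 0 ≤ pgf b x := pgf_nonneg hb hx0
      -- integral of the independent block
      have hG : ∀ m : ℕ,
          ∫⁻ ω, (∏ i ∈ Finset.range m, (ENNReal.ofReal x) ^ (X (n+1) (i+1) ω)) *
              (ENNReal.ofReal x) ^ (Y (n+1) ω) ∂ℙ
            = (ENNReal.ofReal (pgf a x)) ^ m * ENNReal.ofReal (pgf b x) := by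
        intro m
        induction m with
        | zero =>
          have hz : ∀ ω : Ω, (∏ i ∈ Finset.range 0, (ENNReal.ofReal x) ^ (X (n+1) (i+1) ω)) *
              (ENNReal.ofReal x) ^ (Y (n+1) ω) = (ENNReal.ofReal x) ^ (Y (n+1) ω) := by
            intro ω; rw [Finset.prod_range_zero, one_mul]
          rw [lintegral_congr hz, lintegral_pow_dist (hYmeas (n+1)) hb hbS (hYd (n+1)) hx0 hx1,
            pow_zero, one_mul]
        | succ m ihm =>
          have hsplit : ∀ ω : Ω,
              (∏ i ∈ Finset.range (m+1), (ENNReal.ofReal x) ^ (X (n+1) (i+1) ω)) *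
                (ENNReal.ofReal x) ^ (Y (n+1) ω)
              = ((∏ i ∈ Finset.range m, (ENNReal.ofReal x) ^ (X (n+1) (i+1) ω)) *
                  (ENNReal.ofReal x) ^ (Y (n+1) ω)) *
                  (ENNReal.ofReal x) ^ (X (n+1) (m+1) ω) := by
            intro ω; rw [Finset.prod_range_succ]; ring
          have hdisj : Disjoint
              {i : (ℕ × ℕ) ⊕ ℕ | Sum.elim Prod.fst id i = n+1 ∧ i ≠ Sum.inl (n+1, m+1)}
              ({Sum.inl (n+1, m+1)} : Set ((ℕ × ℕ) ⊕ ℕ)) := by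
            apply Set.disjoint_left.mpr
            rintro i ⟨-, hne⟩ hmem
            exact hne hmem
          have hf : Measurable[⨆ i ∈ {i : (ℕ × ℕ) ⊕ ℕ |
                Sum.elim Prod.fst id i = n+1 ∧ i ≠ Sum.inl (n+1, m+1)},
              MeasurableSpace.comap (Sum.elim (fun p : ℕ × ℕ => X p.1 p.2) Y i) inferInstance]
              (fun ω => (∏ i ∈ Finset.range m, (ENNReal.ofReal x) ^ (X (n+1) (i+1) ω)) *
                (ENNReal.ofReal x) ^ (Y (n+1) ω)) := by
            apply gwi_block_meas
            · intro i hi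
              refine ⟨rfl, ?_⟩
              simp only [ne_eq, Sum.inl.injEq, Prod.mk.injEq]
              rintro ⟨-, h2⟩
              omega
            · exact ⟨rfl, by simp⟩
          have hg : Measurable[⨆ i ∈ ({Sum.inl (n+1, m+1)} : Set ((ℕ × ℕ) ⊕ ℕ)),
              MeasurableSpace.comap (Sum.elim (fun p : ℕ × ℕ => X p.1 p.2) Y i) inferInstance]
              (fun ω => (ENNReal.ofReal x) ^ (X (n+1) (m+1) ω)) :=
            measurable_from_top.comp
              (measurable_coord_of_mem (F := Sum.elim (fun p : ℕ × ℕ => X p.1 p.2) Y)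
                (Set.mem_singleton _))
          rw [lintegral_congr hsplit,
            lintegral_mul_of_disjoint_coords hFmeas hindep hdisj hf hg, ihm,
            lintegral_pow_dist (hXmeas (n+1) (m+1)) ha haS (hXd (n+1) (m+1)) hx0 hx1]
          ring
      -- partition over the value of Z n
      have hdisj0 : Disjoint {i : (ℕ × ℕ) ⊕ ℕ | Sum.elim Prod.fst id i ≤ n}
          {i : (ℕ × ℕ) ⊕ ℕ | Sum.elim Prod.fst id i = n+1} := by
        apply Set.disjoint_left.mpr
        intro i hi1 hi2
        simp only [Set.mem_setOf_eq] at hi1 hi2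
        omega
      calc ∫⁻ ω, (ENNReal.ofReal x) ^ (Z (n+1) ω) ∂ℙ
          = ∑' m : ℕ, ∫⁻ ω in {ω' | Z n ω' = m}, (ENNReal.ofReal x) ^ (Z (n+1) ω) ∂ℙ :=
            lintegral_partition (hZmeas n) _
        _ = ∑' m : ℕ, ∫⁻ ω in {ω' | Z n ω' = m},
              (∏ i ∈ Finset.range m, (ENNReal.ofReal x) ^ (X (n+1) (i+1) ω)) *
                (ENNReal.ofReal x) ^ (Y (n+1) ω) ∂ℙ := by
            apply tsum_congr; intro m
            apply setLIntegral_congr_fun (gwi_measurableSet_fiber (hZmeas n) m)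
            intro ω hω
            dsimp only
            rw [hZrec n ω, show Z n ω = m from hω, pow_add, ← Finset.prod_pow_eq_pow_sum]
        _ = ∑' m : ℕ, ℙ {ω' | Z n ω' = m} *
              ((ENNReal.ofReal (pgf a x)) ^ m * ENNReal.ofReal (pgf b x)) := by
            apply tsum_congr; intro m
            rw [← lintegral_indicator (gwi_measurableSet_fiber (hZmeas n) m)]
            have hind_eq : ∀ ω : Ω, Set.indicator {ω' | Z n ω' = m}
                (fun ω => (∏ i ∈ Finset.range m, (ENNReal.ofReal x) ^ (X (n+1) (i+1) ω)) *
                  (ENNReal.ofReal x) ^ (Y (n+1) ω)) ω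
                = (Set.indicator {ω' | Z n ω' = m} (fun _ => (1:ℝ≥0∞)) ω) *
                  ((∏ i ∈ Finset.range m, (ENNReal.ofReal x) ^ (X (n+1) (i+1) ω)) *
                    (ENNReal.ofReal x) ^ (Y (n+1) ω)) := by
              intro ω
              by_cases hω : ω ∈ {ω' | Z n ω' = m} <;> simp [hω]
            have hfind : Measurable[⨆ i ∈ {i : (ℕ × ℕ) ⊕ ℕ | Sum.elim Prod.fst id i ≤ n},
                MeasurableSpace.comap (Sum.elim (fun p : ℕ × ℕ => X p.1 p.2) Y i) inferInstance]
                (Set.indicator {ω' | Z n ω' = m} (fun _ => (1:ℝ≥0∞))) :=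
              measurable_const.indicator (hZM n (measurableSet_singleton m))
            have hgind : Measurable[⨆ i ∈ {i : (ℕ × ℕ) ⊕ ℕ | Sum.elim Prod.fst id i = n+1},
                MeasurableSpace.comap (Sum.elim (fun p : ℕ × ℕ => X p.1 p.2) Y i) inferInstance]
                (fun ω => (∏ i ∈ Finset.range m, (ENNReal.ofReal x) ^ (X (n+1) (i+1) ω)) *
                  (ENNReal.ofReal x) ^ (Y (n+1) ω)) := by
              apply gwi_block_meas
              · intro i _; exact rfl
              · exact rfl
            rw [lintegral_congr hind_eq,
              lintegral_mul_of_disjoint_coords hFmeas hindep hdisj0 hfind hgind,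
              hG m, lintegral_indicator_const (gwi_measurableSet_fiber (hZmeas n) m), one_mul]
        _ = ENNReal.ofReal (pgf b x) *
              ∑' m : ℕ, (ENNReal.ofReal (pgf a x)) ^ m * ℙ {ω' | Z n ω' = m} := by
            rw [← ENNReal.tsum_mul_left]
            apply tsum_congr; intro m
            ring
        _ = ENNReal.ofReal (pgf b x) *
              ∫⁻ ω, (ENNReal.ofReal (pgf a x)) ^ (Z n ω) ∂ℙ := by
            rw [lintegral_comp_nat (hZmeas n) (fun m => (ENNReal.ofReal (pgf a x)) ^ m)]
        _ = ENNReal.ofReal (pgf b x) * ENNReal.ofReal (Hgen a b n (pgf a x)) := by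
            rw [IH (pgf a x) hAx0 hAx1]
        _ = ENNReal.ofReal (Hgen a b (n+1) x) := by
            rw [Hgen_succ, ENNReal.ofReal_mul (Hgen_nonneg ha haS ha1 hb n hAx0 hAx1), mul_comm]
  -- the analytic bound
  obtain ⟨C₄, hC₄, s₀, hs₀pos, hs₀half, hbound⟩ :=
    Hgen_bound ha haS ha1 haMeanSummable haMean haQ hb hbS hb1 hbM hbQ hβ hβpos hγ hγpos hσ
  -- choose N
  set K₀ : ℕ := max 2 ⌈1/s₀⌉₊ with hK₀def
  obtain ⟨N, hN⟩ := (Filter.eventually_atTop).mp (hkinf.eventually_ge_atTop K₀)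
  refine ⟨C₄ * Real.exp 2, by positivity, N, ?_⟩
  intro n hn
  have hkK : K₀ ≤ k n := hN n hn
  have hκ2 : 2 ≤ k n := le_trans (le_max_left _ _) hkK
  have hκpos : (0:ℝ) < (k n : ℝ) := by
    have : (0:ℕ) < k n := by omega
    exact_mod_cast this
  set s : ℝ := 1/(k n : ℝ) with hsdef
  have hs : 0 < s := by positivity
  have hss₀ : s ≤ s₀ := by
    have h1 : 1/s₀ ≤ (⌈1/s₀⌉₊ : ℝ) := Nat.le_ceil _
    have h2 : ((⌈1/s₀⌉₊ : ℕ) : ℝ) ≤ (k n : ℝ) := by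
      exact_mod_cast le_trans (le_max_right 2 _) hkK
    have h3 : 1/s₀ ≤ (k n : ℝ) := le_trans h1 h2
    have h4 := one_div_le_one_div_of_le (by positivity : (0:ℝ) < 1/s₀) h3
    rwa [one_div_one_div] at h4
  have hs_half : s ≤ 1/2 := le_trans hss₀ hs₀half
  have hx0 : (0:ℝ) ≤ 1 - s := by linarith
  have hx1 : (1:ℝ) - s ≤ 1 := by linarith
  -- Markov inequality
  have hsetm : MeasurableSet {ω' : Ω | Z n ω' ≤ k n} := hZmeas n measurableSet_Iic
  have hptwise : ∀ ω : Ω, Set.indicator {ω' : Ω | Z n ω' ≤ k n}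
      (fun _ => ENNReal.ofReal ((1-s) ^ k n)) ω ≤ (ENNReal.ofReal (1-s)) ^ (Z n ω) := by
    intro ω
    by_cases hω : ω ∈ {ω' : Ω | Z n ω' ≤ k n}
    · rw [Set.indicator_of_mem hω, ← ENNReal.ofReal_pow hx0]
      exact ENNReal.ofReal_le_ofReal (pow_le_pow_of_le_one hx0 hx1 hω)
    · rw [Set.indicator_of_notMem hω]; exact zero_le
  have h1 : ENNReal.ofReal ((1-s) ^ k n) * ℙ {ω' : Ω | Z n ω' ≤ k n}
      ≤ ENNReal.ofReal (Hgen a b n (1-s)) := by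
    rw [← lintegral_indicator_const hsetm, ← hkey n (1-s) hx0 hx1]
    exact lintegral_mono hptwise
  have h2 : (1-s) ^ k n * (ℙ {ω' : Ω | Z n ω' ≤ k n}).toReal ≤ Hgen a b n (1-s) := by
    have h3 := ENNReal.toReal_mono ENNReal.ofReal_ne_top h1
    rw [ENNReal.toReal_mul, ENNReal.toReal_ofReal (pow_nonneg hx0 _),
      ENNReal.toReal_ofReal (Hgen_nonneg ha haS ha1 hb n hx0 hx1)] at h3
    exact h3
  -- lower bound on (1-s)^k
  have hes : Real.exp (-2 * s) ≤ 1 - s := by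
    rw [show (-2:ℝ)*s = -(2*s) by ring, Real.exp_neg]
    have hp : (0:ℝ) < 1 + 2*s := by linarith
    have hexp : 1 + 2*s ≤ Real.exp (2*s) := by
      have := Real.add_one_le_exp (2*s); linarith
    have h3 : (Real.exp (2*s))⁻¹ ≤ (1+2*s)⁻¹ := by
      apply inv_anti₀ hp hexp
    have h4 : (1+2*s)⁻¹ ≤ 1 - s := by
      rw [inv_eq_one_div, div_le_iff₀ hp]
      nlinarith
    linarith
  have hxk : Real.exp (-2) ≤ (1-s) ^ k n := by
    have hcalc : Real.exp (-2) = Real.exp (-2*s) ^ k n := by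
      rw [← Real.exp_nat_mul]
      congr 1
      rw [hsdef]
      field_simp
    rw [hcalc]
    exact pow_le_pow_left₀ (Real.exp_pos _).le hes (k n)
  have hxkpos : (0:ℝ) < (1-s) ^ k n := lt_of_lt_of_le (Real.exp_pos _) hxk
  -- combine
  have hH := hbound n s hs hss₀
  have hR0 : (0:ℝ) ≤ (1 + γ*n*s) ^ (-σ) := Real.rpow_nonneg (by positivity) _
  have hfinal : (ℙ {ω' : Ω | Z n ω' ≤ k n}).toReal ≤ (C₄ * (1 + γ*n*s) ^ (-σ)) * Real.exp 2 := by
    have h5 : (ℙ {ω' : Ω | Z n ω' ≤ k n}).toReal ≤ (C₄ * (1 + γ*n*s) ^ (-σ)) / (1-s)^ k n := by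
      rw [le_div_iff₀ hxkpos]
      calc (ℙ {ω' : Ω | Z n ω' ≤ k n}).toReal * (1-s)^ k n
          = (1-s)^ k n * (ℙ {ω' : Ω | Z n ω' ≤ k n}).toReal := by ring
        _ ≤ Hgen a b n (1-s) := h2
        _ ≤ C₄ * (1 + γ*n*s) ^ (-σ) := hH
    have h6 : (C₄ * (1 + γ*n*s) ^ (-σ)) / (1-s)^ k n
        ≤ (C₄ * (1 + γ*n*s) ^ (-σ)) * Real.exp 2 := by
      rw [div_eq_mul_inv]
      apply mul_le_mul_of_nonneg_left _ (by positivity)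
      have h7 : ((1-s) ^ k n)⁻¹ ≤ (Real.exp (-2))⁻¹ :=
        inv_anti₀ (Real.exp_pos _) hxk
      rwa [Real.exp_neg, inv_inv] at h7
    linarith
  have hfrac : γ*(n:ℝ)*s = γ*n/(k n) := by
    rw [hsdef]; ring
  calc (ℙ {ω | Z n ω ≤ k n}).toReal
      ≤ (C₄ * (1 + γ*n*s) ^ (-σ)) * Real.exp 2 := hfinal
    _ = (C₄ * Real.exp 2) * (1 + γ*n/(k n)) ^ (-σ) := by rw [hfrac]; ring
end

section
/- Let A(x) = Σ_{j≥0} a_j x^j be a probability generating function with 0 < a_0 < 1, A′(1−) = 1 and 0 < γ := A″(1−)/2 < ∞. Define δ(x) = γ − [1/(1 − A(x)) − 1/(1 − x)], h_n(x) = Σ_{m=0}^{n−1} δ(A_m(x)) for n ≥ 1, and h_0(x) = 0, where A_m is the m-th iterate of A. Then for all 0 ≤ x < 1 and all n ≥ 0: (i) 1/(1 − x) + nγ − 1/(1 − A_n(x)) = h_n(x); and (ii) −γ²(1 − x)/(1 − a_0) ≤ δ(x) ≤ ε(x), where ε(x) := γ − (A(x) − x)/(1 − x)² satisfies ε(x)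 ≥ 0, ε is non-increasing on [0,1), and ε(x) → 0 as x ↑ 1. -/
open Filter Real Set
open scoped Topology

/-- Partial geometric sum. -/
noncomputable def Sg (x : ℝ) (j : ℕ) : ℝ := ∑ i ∈ Finset.range j, x ^ i

/-- Double partial geometric sum. -/
noncomputable def Tg (x : ℝ) (j : ℕ) : ℝ := ∑ i ∈ Finset.range j, Sg x i

lemma sum_range_id_real (j : ℕ) : ∑ i ∈ Finset.range j, (i : ℝ) = j * (j - 1) / 2 := by
  induction j with
  | zero => simp
  | succ n ih => rw [Finset.sum_range_succ, ih]; push_cast; ring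

lemma Sg_nonneg {x : ℝ} (hx : 0 ≤ x) (j : ℕ) : 0 ≤ Sg x j :=
  Finset.sum_nonneg fun i _ => pow_nonneg hx i

lemma Sg_le {x : ℝ} (hx : 0 ≤ x) (hx1 : x ≤ 1) (j : ℕ) : Sg x j ≤ j := by
  calc Sg x j ≤ ∑ i ∈ Finset.range j, (1 : ℝ) :=
        Finset.sum_le_sum fun i _ => pow_le_one₀ hx hx1
    _ = j := by simp

lemma Sg_one_le {x : ℝ} (hx : 0 ≤ x) (j : ℕ) (hj : 0 < j) : 1 ≤ Sg x j := by
  have := Finset.single_le_sum (f := fun i => x ^ i)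
    (fun i _ => pow_nonneg hx i) (Finset.mem_range.2 hj)
  simpa [Sg] using this

lemma one_sub_mul_Sg (x : ℝ) (j : ℕ) : (1 - x) * Sg x j = 1 - x ^ j := by
  have := geom_sum_mul x j
  unfold Sg; nlinarith [this]

lemma Tg_nonneg {x : ℝ} (hx : 0 ≤ x) (j : ℕ) : 0 ≤ Tg x j :=
  Finset.sum_nonneg fun i _ => Sg_nonneg hx i

lemma Tg_le {x : ℝ} (hx : 0 ≤ x) (hx1 : x ≤ 1) (j : ℕ) : Tg x j ≤ j * (j - 1) / 2 := by
  calc Tg x j ≤ ∑ i ∈ Finset.range j, (i : ℝ) :=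
        Finset.sum_le_sum fun i _ => Sg_le hx hx1 i
    _ = j * (j - 1) / 2 := sum_range_id_real j

lemma Sg_one (j : ℕ) : Sg 1 j = j := by simp [Sg]

lemma Tg_one (j : ℕ) : Tg 1 j = j * (j - 1) / 2 := by
  simp only [Tg, Sg_one]; exact sum_range_id_real j

lemma one_sub_mul_Tg (x : ℝ) (j : ℕ) : (1 - x) * Tg x j = j - Sg x j := by
  unfold Tg
  rw [Finset.mul_sum,
    Finset.sum_congr rfl (fun i _ => one_sub_mul_Sg x i), Finset.sum_sub_distrib]
  simp [Sg]

lemma Sg_mono {x y : ℝ} (hx : 0 ≤ x) (hxy : x ≤ y) (j : ℕ) : Sg x j ≤ Sg y j :=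
  Finset.sum_le_sum fun i _ => pow_le_pow_left₀ hx hxy i

lemma Tg_mono {x y : ℝ} (hx : 0 ≤ x) (hxy : x ≤ y) (j : ℕ) : Tg x j ≤ Tg y j :=
  Finset.sum_le_sum fun i _ => Sg_mono hx hxy i

lemma Tg_continuous (j : ℕ) : Continuous fun x : ℝ => Tg x j := by
  unfold Tg Sg
  exact continuous_finset_sum _ fun i _ => continuous_finset_sum _ fun k _ => continuous_pow k

set_option maxHeartbeats 1000000 in
theorem stmt9
    (a : ℕ → ℝ) (haNonneg : ∀ j, 0 ≤ a j)
    (haSummable : Summable a) (haSum : ∑' j : ℕ, a j = 1)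
    (ha0 : 0 < a 0) (ha01 : a 0 < 1)
    (haMeanSummable : Summable (fun j : ℕ => a j * j))
    (haMean : ∑' j : ℕ, a j * j = 1)
    (hγSummable : Summable (fun j : ℕ => a j * ((j : ℝ) * ((j : ℝ) - 1))))
    (γ : ℝ)
    (hγ : γ = (1 / 2) * ∑' j : ℕ, a j * ((j : ℝ) * ((j : ℝ) - 1)))
    (hγpos : 0 < γ)
    (δf εf : ℝ → ℝ) (h : ℕ → ℝ → ℝ)
    (hδf : ∀ x, δf x = γ - (1 / (1 - pgf a x) - 1 / (1 - x)))
    (hh0 : ∀ x, h 0 x = 0)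
    (hh : ∀ n x, h n x = ∑ m ∈ Finset.range n, δf ((pgf a)^[m] x))
    (hεf : ∀ x, εf x = γ - (pgf a x - x) / (1 - x) ^ 2) :
    (∀ x : ℝ, 0 ≤ x → x < 1 → ∀ n : ℕ,
        1 / (1 - x) + n * γ - 1 / (1 - (pgf a)^[n] x) = h n x) ∧
    (∀ x : ℝ, 0 ≤ x → x < 1 →
        -(γ ^ 2 * (1 - x)) / (1 - a 0) ≤ δf x ∧ δf x ≤ εf x ∧ 0 ≤ εf x) ∧
    AntitoneOn εf (Set.Ico (0 : ℝ) 1) ∧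
    Tendsto εf (nhdsWithin 1 (Set.Iio (1 : ℝ))) (𝓝 0) := by
  -- half-moment summability and value
  have hcSummable : Summable (fun j : ℕ => a j * ((j : ℝ) * ((j : ℝ) - 1) / 2)) := by
    refine (hγSummable.mul_right (1 / 2)).congr fun j => by ring
  have hcSum : ∑' j : ℕ, a j * ((j : ℝ) * ((j : ℝ) - 1) / 2) = γ := by
    rw [hγ, ← tsum_mul_left]
    exact tsum_congr fun j => by ring
  -- basic summabilities for 0 ≤ x ≤ 1
  have hBsum : ∀ x : ℝ, 0 ≤ x → x ≤ 1 → Summable (fun j => a j * Sg x j) := by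
    intro x hx hx1
    refine Summable.of_nonneg_of_le
      (fun j => mul_nonneg (haNonneg j) (Sg_nonneg hx j))
      (fun j => mul_le_mul_of_nonneg_left (Sg_le hx hx1 j) (haNonneg j)) haMeanSummable
  have hCsum : ∀ x : ℝ, 0 ≤ x → x ≤ 1 → Summable (fun j => a j * Tg x j) := by
    intro x hx hx1
    refine Summable.of_nonneg_of_le
      (fun j => mul_nonneg (haNonneg j) (Tg_nonneg hx j))
      (fun j => mul_le_mul_of_nonneg_left (Tg_le hx hx1 j) (haNonneg j)) hcSummable
  have hAsum : ∀ x : ℝ, 0 ≤ x → x ≤ 1 → Summable (fun j => a j * x ^ j) := by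
    intro x hx hx1
    refine Summable.of_nonneg_of_le
      (fun j => mul_nonneg (haNonneg j) (pow_nonneg hx j))
      (fun j => ?_) haSummable
    have := pow_le_one₀ hx hx1 (n := j)
    nlinarith [haNonneg j, pow_nonneg hx j]
  -- the two key identities
  have hAid : ∀ x : ℝ, 0 ≤ x → x ≤ 1 →
      1 - pgf a x = (1 - x) * ∑' j, a j * Sg x j := by
    intro x hx hx1
    rw [← tsum_mul_left]
    have : ∀ j : ℕ, (1 - x) * (a j * Sg x j) = a j - a j * x ^ j := by
      intro j
      linear_combination a j * one_sub_mul_Sg x j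
    rw [tsum_congr this, Summable.tsum_sub haSummable (hAsum x hx hx1), haSum, pgf]
  have hBid : ∀ x : ℝ, 0 ≤ x → x ≤ 1 →
      1 - ∑' j, a j * Sg x j = (1 - x) * ∑' j, a j * Tg x j := by
    intro x hx hx1
    rw [← tsum_mul_left]
    have : ∀ j : ℕ, (1 - x) * (a j * Tg x j) = a j * j - a j * Sg x j := by
      intro j
      linear_combination a j * one_sub_mul_Tg x j
    rw [tsum_congr this, Summable.tsum_sub haMeanSummable (hBsum x hx hx1), haMean]
  -- bounds on B and C
  have hCnonneg : ∀ x : ℝ, 0 ≤ x → 0 ≤ ∑' j, a j * Tg x j := by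
    intro x hx
    exact tsum_nonneg fun j => mul_nonneg (haNonneg j) (Tg_nonneg hx j)
  have hCleγ : ∀ x : ℝ, 0 ≤ x → x ≤ 1 → ∑' j, a j * Tg x j ≤ γ := by
    intro x hx hx1
    rw [← hcSum]
    exact Summable.tsum_le_tsum
      (fun j => mul_le_mul_of_nonneg_left (Tg_le hx hx1 j) (haNonneg j))
      (hCsum x hx hx1) hcSummable
  have hBle1 : ∀ x : ℝ, 0 ≤ x → x ≤ 1 → ∑' j, a j * Sg x j ≤ 1 := by
    intro x hx hx1
    rw [← haMean]
    exact Summable.tsum_le_tsum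
      (fun j => mul_le_mul_of_nonneg_left (Sg_le hx hx1 j) (haNonneg j))
      (hBsum x hx hx1) haMeanSummable
  have hBge : ∀ x : ℝ, 0 ≤ x → x ≤ 1 → 1 - a 0 ≤ ∑' j, a j * Sg x j := by
    intro x hx hx1
    have hBs := hBsum x hx hx1
    have hshift : Summable fun j : ℕ => a (j + 1) * Sg x (j + 1) :=
      (summable_nat_add_iff (f := fun j => a j * Sg x j) 1).2 hBs
    have hashift : Summable fun j : ℕ => a (j + 1) :=
      (summable_nat_add_iff (f := a) 1).2 haSummable
    have h1 : ∑' j, a j * Sg x j = a 0 * Sg x 0 + ∑' j, a (j + 1) * Sg x (j + 1) :=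
      Summable.tsum_eq_zero_add hBs
    have h2 : (1 : ℝ) = a 0 + ∑' j, a (j + 1) := by
      rw [← haSum]; exact Summable.tsum_eq_zero_add haSummable
    have h3 : ∑' j, a (j + 1) ≤ ∑' j, a (j + 1) * Sg x (j + 1) := by
      refine Summable.tsum_le_tsum (fun j => ?_) hashift hshift
      have := Sg_one_le hx (j + 1) (Nat.succ_pos j)
      nlinarith [haNonneg (j + 1)]
    have : Sg x 0 = 0 := by simp [Sg]
    rw [h1, this]
    linarith
  have ha0' : (0 : ℝ) < 1 - a 0 := by linarith
  -- part (i): telescoping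
  have part1 : ∀ x : ℝ, ∀ n : ℕ,
      1 / (1 - x) + n * γ - 1 / (1 - (pgf a)^[n] x) = h n x := by
    intro x n
    rw [hh]
    induction n with
    | zero => simp
    | succ n ih =>
      rw [Finset.sum_range_succ, ← ih, hδf, Function.iterate_succ_apply']
      push_cast
      ring
  refine ⟨fun x _ _ n => part1 x n, ?_, ?_, ?_⟩
  -- part (ii)
  · intro x hx hx1
    have hx1' : (0:ℝ) < 1 - x := by linarith
    set B := ∑' j, a j * Sg x j with hB
    set C := ∑' j, a j * Tg x j with hC
    have hA : 1 - pgf a x = (1 - x) * B := hAid x hx hx1.le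
    have h1B : 1 - B = (1 - x) * C := hBid x hx hx1.le
    have hC0 : 0 ≤ C := hCnonneg x hx
    have hCγ : C ≤ γ := hCleγ x hx hx1.le
    have hB1 : B ≤ 1 := hBle1 x hx hx1.le
    have hBlo : 1 - a 0 ≤ B := hBge x hx hx1.le
    have hBpos : 0 < B := lt_of_lt_of_le ha0' hBlo
    have hδeq : δf x = γ - C / B := by
      rw [hδf, hA]
      have : 1 / ((1 - x) * B) - 1 / (1 - x) = C / B := by
        field_simp
        linear_combination h1B
      rw [this]
    have hεeq : εf x = γ - C := by
      rw [hεf]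
      have hAx : pgf a x - x = (1 - x) ^ 2 * C := by nlinarith [hA, h1B]
      rw [hAx]
      field_simp
    refine ⟨?_, ?_, ?_⟩
    · -- lower bound
      rw [hδeq]
      have hq : γ ^ 2 * (1 - x) / (1 - a 0) * (1 - a 0) = γ ^ 2 * (1 - x) :=
        div_mul_cancel₀ _ (ne_of_gt ha0')
      have hqnn : 0 ≤ γ ^ 2 * (1 - x) / (1 - a 0) :=
        div_nonneg (by nlinarith) ha0'.le
      have e1 : γ * (1 - B) = γ * ((1 - x) * C) := by rw [h1B]
      have e2 : γ * (1 - x) * C ≤ γ * (1 - x) * γ :=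
        mul_le_mul_of_nonneg_left hCγ (mul_nonneg hγpos.le hx1'.le)
      have hC' : C ≤ γ * B + γ ^ 2 * (1 - x) := by nlinarith [e1, e2, hCγ]
      have : C / B ≤ γ + γ ^ 2 * (1 - x) / (1 - a 0) := by
        rw [div_le_iff₀ hBpos]
        nlinarith [hC', hq, hqnn, mul_le_mul_of_nonneg_left hBlo hqnn]
      have hneg : -(γ ^ 2 * (1 - x)) / (1 - a 0) = -(γ ^ 2 * (1 - x) / (1 - a 0)) := by
        ring
      rw [hneg]
      linarith
    · -- δ ≤ ε
      rw [hδeq, hεeq]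
      have : C ≤ C / B := by
        rw [le_div_iff₀ hBpos]
        nlinarith [mul_le_mul_of_nonneg_left hB1 hC0]
      linarith
    · rw [hεeq]; linarith
  -- antitone
  · intro x hx y hy hxy
    have hεx : ∀ z : ℝ, 0 ≤ z → z < 1 → εf z = γ - ∑' j, a j * Tg z j := by
      intro z hz hz1
      have hz1' : (0:ℝ) < 1 - z := by linarith
      rw [hεf]
      set Bz := ∑' j, a j * Sg z j
      set Cz := ∑' j, a j * Tg z j
      have hAz : pgf a z - z = (1 - z) ^ 2 * Cz := by
        linear_combination (-1 : ℝ) * hAid z hz hz1.le + (1 - z) * hBid z hz hz1.le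
      rw [hAz]
      field_simp
    rw [hεx x hx.1 hx.2, hεx y hy.1 hy.2]
    have : ∑' j, a j * Tg x j ≤ ∑' j, a j * Tg y j :=
      Summable.tsum_le_tsum
        (fun j => mul_le_mul_of_nonneg_left (Tg_mono hx.1 hxy j) (haNonneg j))
        (hCsum x hx.1 hx.2.le) (hCsum y hy.1 hy.2.le)
    linarith
  -- limit
  · have hCic : Tendsto (fun x => ∑' j, a j * Tg x j) (𝓝[<] (1:ℝ)) (𝓝 γ) := by
      have := tendsto_tsum_of_dominated_convergence
        (f := fun (x : ℝ) (j : ℕ) => a j * Tg x j)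
        (g := fun j : ℕ => a j * ((j : ℝ) * ((j : ℝ) - 1) / 2))
        (bound := fun j : ℕ => a j * ((j : ℝ) * ((j : ℝ) - 1) / 2))
        (𝓕 := 𝓝[<] (1:ℝ)) hcSummable ?_ ?_
      · rwa [hcSum] at this
      · intro j
        have hcont : Tendsto (fun x : ℝ => a j * Tg x j) (𝓝 1) (𝓝 (a j * Tg 1 j)) :=
          ((continuous_const.mul (Tg_continuous j)).tendsto 1)
        rw [Tg_one] at hcont
        exact hcont.mono_left nhdsWithin_le_nhds
      · have hmem : Set.Ioo (0:ℝ) 1 ∈ 𝓝[<] (1:ℝ) :=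
          Ioo_mem_nhdsLT_of_mem (by constructor <;> norm_num)
        filter_upwards [hmem] with x hx j
        have h1 : 0 ≤ a j * Tg x j := mul_nonneg (haNonneg j) (Tg_nonneg hx.1.le j)
        rw [Real.norm_eq_abs, abs_of_nonneg h1]
        exact mul_le_mul_of_nonneg_left (Tg_le hx.1.le hx.2.le j) (haNonneg j)
    have heq : ∀ᶠ x in 𝓝[<] (1:ℝ), (γ - ∑' j, a j * Tg x j) = εf x := by
      have hmem : Set.Ioo (0:ℝ) 1 ∈ 𝓝[<] (1:ℝ) :=
        Ioo_mem_nhdsLT_of_mem (by constructor <;> norm_num)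
      filter_upwards [hmem] with x hx
      have hx1' : (0:ℝ) < 1 - x := by linarith [hx.2]
      rw [hεf]
      set Bz := ∑' j, a j * Sg x j
      set Cz := ∑' j, a j * Tg x j
      have hAz : pgf a x - x = (1 - x) ^ 2 * Cz := by
        linear_combination (-1 : ℝ) * hAid x hx.1.le hx.2.le + (1 - x) * hBid x hx.1.le hx.2.le
      rw [hAz]
      field_simp
    have : Tendsto (fun x => γ - ∑' j, a j * Tg x j) (𝓝[<] (1:ℝ)) (𝓝 (γ - γ)) :=
      tendsto_const_nhds.sub hCic
    rw [sub_self] at this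
    exact this.congr' heq
end
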